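/- arXiv:2411.06177 — 2 statements merged into one kernel-verified Lean document; each statement's English description precedes it below -/
import Mathlib

section
/- Let G be a finite connected simple graph and let v be a vertex of G with nonempty neighborhood. Let G' be the graph obtained from G by duplicating v without an edge, i.e. adding a new vertex v' adjacent exactly to the neighbors of v (and not to v itself). Then P_{G'}((x_u)_{u∈V(G)}, x_{v'}) = P_G((x_u)_{u≠v}, x_v + x_{v'}) · (Σ_{u∈N_G(v)} x_u), where in the first factor the variable of v is replaced by x_v + x_{v'}. -/
open scoped BigOperators

/-- The number of spanning trees of `G`: the number of subgraphs (as simple graphs on the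
same vertex set, with edge set contained in that of `G`) that are trees. -/
noncomputable def treeNum {V : Type*} (G : SimpleGraph V) : ℕ :=
  Nat.card {T : SimpleGraph V // T ≤ G ∧ T.IsTree}

/-- The vertex degree enumerator of `G` evaluated at `x`:
`P_G(x) = ∑_{spanning trees T of G} ∏_v x v ^ (deg_T v - 1)`. -/
noncomputable def degEnum {V : Type*} [Fintype V] (G : SimpleGraph V) (x : V → ℝ) : ℝ :=
  ∑ᶠ T ∈ {T : SimpleGraph V | T ≤ G ∧ T.IsTree},
    ∏ v : V, x v ^ ((T.neighborSet v).ncard - 1)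

/-- Duplication of the vertex `v` without an edge: the new vertex `none` is adjacent
exactly to the neighbors of `v` (and not to `v` itself). -/
def dupNoEdge {V : Type*} (G : SimpleGraph V) (v : V) : SimpleGraph (Option V) where
  Adj a b :=
    match a, b with
    | some u, some w => G.Adj u w
    | some u, none => G.Adj u v
    | none, some w => G.Adj w v
    | none, none => False
  symm := by
    constructor
    rintro (_ | a) (_ | b) h
    · exact h
    · exact h
    · exact h
    · exact h.symm
  loopless := by
    constructor
    rintro (_ | a) h
    · exact h
    · exact G.irrefl h


open SimpleGraph

namespace Stmt7Aux

variable {W : Type*} {α β : Type*}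

/-- Delete a vertex from a graph (keeping it as an isolated vertex). -/
def del (R : SimpleGraph W) (p : W) : SimpleGraph W where
  Adj a b := R.Adj a b ∧ a ≠ p ∧ b ≠ p
  symm := ⟨fun a b ⟨h, ha, hb⟩ => ⟨h.symm, hb, ha⟩⟩
  loopless := ⟨fun a ⟨h, _, _⟩ => R.irrefl h⟩

lemma del_le (R : SimpleGraph W) (p : W) : del R p ≤ R := fun _ _ h => h.1

lemma reach_of_walk {X : SimpleGraph α} {Y : SimpleGraph β} (f : α → β)
    (hf : ∀ a b, X.Adj a b → Y.Reachable (f a) (f b)) {a b : α} (w : X.Walk a b) :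
    Y.Reachable (f a) (f b) := by
  induction w with
  | nil => exact Reachable.refl _
  | cons h _ ih => exact (hf _ _ h).trans ih

lemma walk_avoid_to_del {R : SimpleGraph W} {p : W} {a b : W} (w : R.Walk a b)
    (hp : p ∉ w.support) : (del R p).Reachable a b := by
  induction w with
  | nil => exact Reachable.refl _
  | @cons a c b h w ih =>
    rw [SimpleGraph.Walk.support_cons, List.mem_cons] at hp
    push_neg at hp
    refine (SimpleGraph.Adj.reachable ?_).trans (ih hp.2)
    exact ⟨h, fun h' => hp.1 h'.symm, fun h' => hp.2 (h' ▸ w.start_mem_support)⟩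

lemma del_reach_walk {R : SimpleGraph W} {p : W} {a b : W}
    (h : (del R p).Reachable a b) (ha : a ≠ p) : ∃ w : R.Walk a b, p ∉ w.support := by
  obtain ⟨w⟩ := h
  induction w with
  | nil => exact ⟨SimpleGraph.Walk.nil, by simpa using fun h => ha h.symm⟩
  | @cons a c b h w ih =>
    obtain ⟨w', hw'⟩ := ih h.2.2
    refine ⟨SimpleGraph.Walk.cons h.1 w', ?_⟩
    simp only [SimpleGraph.Walk.support_cons, List.mem_cons]
    push_neg
    exact ⟨fun h' => ha h'.symm, hw'⟩

lemma gateway [DecidableEq W] {R : SimpleGraph W} (hR : R.IsTree) {p q : W} (hq : q ≠ p) :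
    ∃! b, R.Adj p b ∧ (del R p).Reachable q b := by
  -- existence
  obtain ⟨w0⟩ := hR.isConnected q p
  have hrev : (w0.toPath : R.Walk q p).reverse.IsPath := (w0.toPath).2.reverse
  obtain ⟨c, hadj, w', hw'⟩ :=
    SimpleGraph.Walk.exists_eq_cons_of_ne (Ne.symm hq) (w0.toPath : R.Walk q p).reverse
  have hps : p ∉ w'.support := by
    rw [hw', SimpleGraph.Walk.cons_isPath_iff] at hrev
    exact hrev.2
  have hreach : (del R p).Reachable q c := by
    have : p ∉ w'.reverse.support := by rwa [SimpleGraph.Walk.support_reverse, List.mem_reverse]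
    exact walk_avoid_to_del w'.reverse this
  refine ⟨c, ⟨hadj, hreach⟩, ?_⟩
  -- uniqueness
  rintro b ⟨hb, hrb⟩
  by_contra hne
  have hreach2 : (del R p).Reachable b c := hrb.symm.trans hreach
  obtain ⟨w, hw⟩ := del_reach_walk hreach2 hb.ne'
  have hws : p ∉ (w.toPath : R.Walk b c).support :=
    fun hmem => hw (SimpleGraph.Walk.support_toPath_subset w hmem)
  have hP1 : (SimpleGraph.Walk.cons hb (w.toPath : R.Walk b c)).IsPath :=
    (SimpleGraph.Walk.cons_isPath_iff _ _).2 ⟨(w.toPath).2, hws⟩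
  have := hR.IsAcyclic.path_unique ⟨_, hP1⟩ (SimpleGraph.Path.singleton hadj)
  have hsupp : b ∈ (SimpleGraph.Path.singleton hadj : R.Walk p c).support := by
    rw [← Subtype.ext_iff.mp this]
    simp [SimpleGraph.Walk.support_cons]
  simp only [SimpleGraph.Path.singleton, SimpleGraph.Walk.support_cons,
    SimpleGraph.Walk.support_nil, List.mem_cons, List.mem_singleton] at hsupp
  rcases hsupp with h | h | h
  · exact hb.ne' h
  · exact hne h
  · simp at h


lemma connected_sdiff_of_reachable {G : SimpleGraph W} (hG : G.Connected) {a b : W}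
    (hr : (G \ fromEdgeSet {s(a, b)}).Reachable a b) :
    (G \ fromEdgeSet {s(a, b)}).Connected := by
  have hf : ∀ c d, G.Adj c d → (G \ fromEdgeSet {s(a, b)}).Reachable c d := by
    intro c d hcd
    by_cases he : s(c, d) = s(a, b)
    · rw [Sym2.eq_iff] at he
      rcases he with ⟨rfl, rfl⟩ | ⟨rfl, rfl⟩
      · exact hr
      · exact hr.symm
    · refine SimpleGraph.Adj.reachable ?_
      simp only [SimpleGraph.sdiff_adj, SimpleGraph.fromEdgeSet_adj, Set.mem_singleton_iff]
      exact ⟨hcd, fun h => he h.1⟩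
  haveI := hG.nonempty
  refine SimpleGraph.Connected.mk (fun x y => ?_)
  obtain ⟨w⟩ := hG x y
  simpa using reach_of_walk id hf w

lemma edgeSet_sdiff_single {G : SimpleGraph W} {a b : W} (he : s(a, b) ∈ G.edgeSet) :
    (G \ fromEdgeSet {s(a, b)}).edgeSet = G.edgeSet \ {s(a, b)} := by
  rw [SimpleGraph.edgeSet_sdiff, SimpleGraph.edgeSet_fromEdgeSet]
  ext f
  simp only [Set.mem_diff, Set.mem_singleton_iff, Set.mem_setOf_eq]
  constructor
  · rintro ⟨hf, h2⟩
    exact ⟨hf, fun h => h2 ⟨h, G.not_isDiag_of_mem_edgeSet hf⟩⟩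
  · rintro ⟨hf, h2⟩
    exact ⟨hf, fun h => h2 h.1⟩

lemma card_le_ncard_edgeSet [Fintype W] :
    ∀ (n : ℕ) (G : SimpleGraph W), G.edgeSet.ncard = n → G.Connected →
      Fintype.card W ≤ n + 1 := by
  intro n
  induction n using Nat.strong_induction_on with
  | _ n ih =>
    intro G hn hG
    classical
    by_cases hA : G.IsAcyclic
    · have htree : G.IsTree := ⟨hG, hA⟩
      have h1 := htree.card_edgeFinset
      have h2 : G.edgeFinset.card = G.edgeSet.ncard := by
        rw [Set.ncard_eq_toFinset_card']
        congr 1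
      omega
    · rw [isAcyclic_iff_forall_edge_isBridge] at hA
      push_neg at hA
      obtain ⟨e, he, hbe⟩ := hA
      induction e with
      | _ a b =>
        have hadj : G.Adj a b := he
        rw [SimpleGraph.isBridge_iff] at hbe
        push_neg at hbe
        have hconn := connected_sdiff_of_reachable hG hbe
        have hpos : 0 < n := hn ▸ (Set.ncard_pos (Set.toFinite _)).2 ⟨_, he⟩
        have hcard : (G \ fromEdgeSet {s(a, b)}).edgeSet.ncard = n - 1 := by
          rw [edgeSet_sdiff_single he, Set.ncard_diff_singleton_of_mem he, hn]
        have := ih (n - 1) (by omega) _ hcard hconn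
        omega

lemma isTree_of_connected_of_ncard [Fintype W] {G : SimpleGraph W} (hG : G.Connected)
    (hcard : G.edgeSet.ncard + 1 = Fintype.card W) : G.IsTree := by
  classical
  refine ⟨hG, ?_⟩
  by_contra hA
  rw [isAcyclic_iff_forall_edge_isBridge] at hA
  push_neg at hA
  obtain ⟨e, he, hbe⟩ := hA
  induction e with
  | _ a b =>
    have hadj : G.Adj a b := he
    rw [SimpleGraph.isBridge_iff] at hbe
    push_neg at hbe
    have hconn := connected_sdiff_of_reachable hG hbe
    have hcard2 : (G \ fromEdgeSet {s(a, b)}).edgeSet.ncard = G.edgeSet.ncard - 1 := by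
      rw [edgeSet_sdiff_single he, Set.ncard_diff_singleton_of_mem he]
    have h1 : 0 < G.edgeSet.ncard := (Set.ncard_pos (Set.toFinite _)).2 ⟨_, he⟩
    have := card_le_ncard_edgeSet _ _ hcard2 hconn
    omega

section Main
variable {V : Type*} [Fintype V] [DecidableEq V]

/-- Split the vertex `v` of `T`: edges from `v` to `S` are rerouted to the new vertex `none`,
and an extra edge from `none` to `u` is added. -/
def spl (v : V) (T : SimpleGraph V) (u : V) (S : Finset V) : SimpleGraph (Option V) where
  Adj a b := match a, b with
    | some a, some b => T.Adj a b ∧ ¬(a = v ∧ b ∈ S) ∧ ¬(b = v ∧ a ∈ S)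
    | some a, none => a ∈ S ∨ a = u
    | none, some b => b ∈ S ∨ b = u
    | none, none => False
  symm := by
    constructor
    rintro (_ | a) (_ | b) h
    · exact h
    · exact h
    · exact h
    · exact ⟨h.1.symm, h.2.2, h.2.1⟩
  loopless := by
    constructor
    rintro (_ | a) h
    · exact h
    · exact T.irrefl h.1

variable {v : V} {T : SimpleGraph V} {u : V} {S : Finset V}

@[simp] lemma spl_adj_some_some {a b : V} :
    (spl v T u S).Adj (some a) (some b) ↔
      T.Adj a b ∧ ¬(a = v ∧ b ∈ S) ∧ ¬(b = v ∧ a ∈ S) := Iff.rfl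

@[simp] lemma spl_adj_none_some {b : V} :
    (spl v T u S).Adj none (some b) ↔ b ∈ S ∨ b = u := Iff.rfl

@[simp] lemma spl_adj_some_none {a : V} :
    (spl v T u S).Adj (some a) none ↔ a ∈ S ∨ a = u := Iff.rfl

@[simp] lemma spl_adj_none_none : ¬ (spl v T u S).Adj none none := fun h => h

lemma nbr_none : (spl v T u S).neighborSet none = some '' (↑S ∪ {u}) := by
  ext (_ | b) <;> simp [mem_neighborSet, or_comm]

lemma nbr_none_ncard (huS : u ∉ S) :
    ((spl v T u S).neighborSet none).ncard = S.card + 1 := by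
  rw [nbr_none, Set.ncard_image_of_injective _ (Option.some_injective V)]
  rw [Set.union_singleton, Set.ncard_insert_of_notMem (by simpa using huS) (Set.toFinite _)]
  simp [Set.ncard_coe_finset]

lemma nbr_v (hSv : v ∉ S) (huv : u ≠ v) :
    (spl v T u S).neighborSet (some v) = some '' (T.neighborSet v \ ↑S) := by
  ext (_ | b)
  · simp [mem_neighborSet, hSv, huv.symm]
  · simp only [mem_neighborSet, spl_adj_some_some, Set.mem_image, Set.mem_diff,
      Option.some.injEq]
    aesop

lemma nbr_v_ncard (hSsub : ↑S ⊆ T.neighborSet v) (hSv : v ∉ S) (huv : u ≠ v) :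
    ((spl v T u S).neighborSet (some v)).ncard = (T.neighborSet v).ncard - S.card := by
  rw [nbr_v hSv huv, Set.ncard_image_of_injective _ (Option.some_injective V),
    Set.ncard_diff hSsub (Set.toFinite _), Set.ncard_coe_finset]

lemma nbr_u (huv : u ≠ v) (huS : u ∉ S) :
    (spl v T u S).neighborSet (some u) = insert none (some '' T.neighborSet u) := by
  ext (_ | b)
  · simp [mem_neighborSet]
  · simp [mem_neighborSet, huv, huS]

lemma nbr_u_ncard (huv : u ≠ v) (huS : u ∉ S) :
    ((spl v T u S).neighborSet (some u)).ncard = (T.neighborSet u).ncard + 1 := by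
  rw [nbr_u huv huS, Set.ncard_insert_of_notMem (by simp) (Set.toFinite _),
    Set.ncard_image_of_injective _ (Option.some_injective V)]

lemma nbr_mem {w : V} (hw : w ∈ S) (hSv : v ∉ S) (hwu : w ≠ u) :
    (spl v T u S).neighborSet (some w) = insert none (some '' (T.neighborSet w \ {v})) := by
  ext (_ | b)
  · simp [mem_neighborSet, hw]
  · simp only [mem_neighborSet, spl_adj_some_some, Set.mem_insert_iff, Set.mem_image,
      Set.mem_diff, Set.mem_singleton_iff, Option.some.injEq, reduceCtorEq, false_or]
    aesop

lemma nbr_mem_ncard {w : V} (hw : w ∈ S) (hSsub : ↑S ⊆ T.neighborSet v) (hSv : v ∉ S)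
    (hwu : w ≠ u) :
    ((spl v T u S).neighborSet (some w)).ncard = (T.neighborSet w).ncard := by
  have hadj : T.Adj v w := hSsub hw
  have hv : v ∈ T.neighborSet w := hadj.symm
  rw [nbr_mem hw hSv hwu, Set.ncard_insert_of_notMem (by simp) (Set.toFinite _),
    Set.ncard_image_of_injective _ (Option.some_injective V),
    Set.ncard_diff_singleton_of_mem hv]
  have : 0 < (T.neighborSet w).ncard := (Set.ncard_pos (Set.toFinite _)).2 ⟨v, hv⟩
  omega

lemma nbr_other {w : V} (hwv : w ≠ v) (hwu : w ≠ u) (hwS : w ∉ S) :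
    (spl v T u S).neighborSet (some w) = some '' T.neighborSet w := by
  ext (_ | b)
  · simp [mem_neighborSet, hwS, hwu]
  · simp [mem_neighborSet, hwv, hwS]

lemma nbr_other_ncard {w : V} (hwv : w ≠ v) (hwu : w ≠ u) (hwS : w ∉ S) :
    ((spl v T u S).neighborSet (some w)).ncard = (T.neighborSet w).ncard := by
  rw [nbr_other hwv hwu hwS, Set.ncard_image_of_injective _ (Option.some_injective V)]

end Main

lemma sum_ncard_eq_twice {W : Type*} [Fintype W] (H : SimpleGraph W) :
    ∑ w, (H.neighborSet w).ncard = 2 * H.edgeSet.ncard := by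
  classical
  have h := H.sum_degrees_eq_twice_card_edges
  have h2 : ∀ w, (H.neighborSet w).ncard = H.degree w := by
    intro w
    rw [← SimpleGraph.card_neighborSet_eq_degree, Set.ncard_eq_toFinset_card',
      Set.toFinset_card]
  have h3 : H.edgeFinset.card = H.edgeSet.ncard := by
    rw [Set.ncard_eq_toFinset_card']
    congr 1
  rw [← h3, ← h]
  exact Finset.sum_congr rfl fun w _ => h2 w

section Main2
variable {V : Type*} [Fintype V] [DecidableEq V]
variable {G : SimpleGraph V} {v : V} {T : SimpleGraph V} {u : V} {S : Finset V}

lemma not_mem_of_subset_nbr (hSsub : ↑S ⊆ T.neighborSet v) : v ∉ S :=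
  fun hv => T.irrefl (v := v) (hSsub hv)

lemma spl_le (hT : T ≤ G) (hu : G.Adj v u) (hSsub : ↑S ⊆ T.neighborSet v) :
    spl v T u S ≤ dupNoEdge G v := by
  rintro (_ | a) (_ | b) h
  · exact h
  · rcases (spl_adj_none_some.1 h) with hb | rfl
    · exact (hT (hSsub hb)).symm
    · exact hu.symm
  · rcases (spl_adj_some_none.1 h) with ha | rfl
    · exact (hT (hSsub ha)).symm
    · exact hu.symm
  · exact hT h.1

/-- The gateway vertex: the `T`-neighbor of `v` through which `u` connects to `v`. -/
noncomputable def cgw (v : V) (T : SimpleGraph V) (u : V) : V :=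
  @Classical.epsilon V ⟨v⟩ (fun b => T.Adj v b ∧ (del T v).Reachable u b)

lemma cgw_spec (hT : T.IsTree) (huv : u ≠ v) :
    T.Adj v (cgw v T u) ∧ (del T v).Reachable u (cgw v T u) := by
  obtain ⟨b, hb, -⟩ := gateway hT huv
  exact Classical.epsilon_spec (⟨b, hb⟩ : ∃ b, T.Adj v b ∧ (del T v).Reachable u b)

lemma cgw_eq (hT : T.IsTree) (huv : u ≠ v) {b : V}
    (hb : T.Adj v b ∧ (del T v).Reachable u b) : b = cgw v T u := by
  obtain ⟨c, -, hc⟩ := gateway hT huv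
  rw [hc b hb, hc _ (cgw_spec hT huv)]

lemma spl_connected (hT : T.IsTree) (huv : u ≠ v) (hSsub : ↑S ⊆ T.neighborSet v)
    (hc : cgw v T u ∉ S) : (spl v T u S).Connected := by
  obtain ⟨hvc, hreach⟩ := cgw_spec (v := v) (T := T) (u := u) hT huv
  have hSv : v ∉ S := not_mem_of_subset_nbr hSsub
  have hadjvc : (spl v T u S).Adj (some v) (some (cgw v T u)) :=
    ⟨hvc, fun h => hc h.2, fun h => hvc.ne' h.1⟩
  have hcu : (spl v T u S).Reachable (some u) (some (cgw v T u)) := by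
    obtain ⟨w⟩ := hreach
    refine reach_of_walk some (fun a b h => ?_) w
    exact SimpleGraph.Adj.reachable ⟨h.1, fun hh => h.2.1 hh.1, fun hh => h.2.2 hh.1⟩
  have hnone : (spl v T u S).Reachable none (some v) := by
    refine (SimpleGraph.Adj.reachable (spl_adj_none_some.2 (Or.inr rfl))).trans ?_
    exact hcu.trans hadjvc.reachable.symm
  have hmain : ∀ a : V, (spl v T u S).Reachable (some a) (some v) := by
    intro a
    obtain ⟨w⟩ := hT.isConnected a v
    refine reach_of_walk some (fun a b h => ?_) w
    by_cases h1 : a = v ∧ b ∈ S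
    · obtain ⟨ha, hb⟩ := h1
      have hb' : (spl v T u S).Adj none (some b) := spl_adj_none_some.2 (Or.inl hb)
      rw [ha]
      exact hnone.symm.trans hb'.reachable
    · by_cases h2 : b = v ∧ a ∈ S
      · obtain ⟨hbv, ha⟩ := h2
        rw [hbv]
        exact (SimpleGraph.Adj.reachable (spl_adj_some_none.2 (Or.inl ha))).trans hnone
      · exact (SimpleGraph.Adj.reachable ⟨h, h1, h2⟩)
  have : ∀ o : Option V, (spl v T u S).Reachable o (some v) := by
    rintro (_ | a)
    · exact hnone
    · exact hmain a
  exact SimpleGraph.Connected.mk fun x y => (this x).trans (this y).symm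

lemma spl_sum_deg (hSsub : ↑S ⊆ T.neighborSet v) (huS : u ∉ S) (huv : u ≠ v) :
    ∑ o : Option V, ((spl v T u S).neighborSet o).ncard
      = (∑ w : V, (T.neighborSet w).ncard) + 2 := by
  have hSv : v ∉ S := not_mem_of_subset_nbr hSsub
  have hvu : v ≠ u := huv.symm
  have hSle : S.card ≤ (T.neighborSet v).ncard := by
    rw [← Set.ncard_coe_finset]
    exact Set.ncard_le_ncard hSsub (Set.toFinite _)
  rw [Fintype.sum_option]
  have hu_mem : u ∈ Finset.univ.erase v := Finset.mem_erase.2 ⟨huv, Finset.mem_univ u⟩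
  have key : ∀ (F : V → ℕ),
      ∑ w : V, F w = F v + (F u + ∑ w ∈ (Finset.univ.erase v).erase u, F w) := by
    intro F
    rw [Finset.add_sum_erase _ F hu_mem, Finset.add_sum_erase _ F (Finset.mem_univ v)]
  rw [key, nbr_none_ncard huS, nbr_v_ncard hSsub hSv huv, nbr_u_ncard huv huS,
    key fun w => (T.neighborSet w).ncard]
  have herase : ∑ w ∈ (Finset.univ.erase v).erase u, ((spl v T u S).neighborSet (some w)).ncard
      = ∑ w ∈ (Finset.univ.erase v).erase u, (T.neighborSet w).ncard := by
    refine Finset.sum_congr rfl fun w hw => ?_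
    rw [Finset.mem_erase, Finset.mem_erase] at hw
    obtain ⟨hwu, hwv, -⟩ := hw
    by_cases hwS : w ∈ S
    · exact nbr_mem_ncard hwS hSsub hSv hwu
    · exact nbr_other_ncard hwv hwu hwS
  rw [herase]
  omega

lemma spl_isTree (hT : T.IsTree) (huv : u ≠ v) (hSsub : ↑S ⊆ T.neighborSet v)
    (huS : u ∉ S) (hc : cgw v T u ∉ S) : (spl v T u S).IsTree := by
  refine isTree_of_connected_of_ncard (spl_connected hT huv hSsub hc) ?_
  have hTcard : T.edgeSet.ncard + 1 = Fintype.card V := by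
    classical
    have h1 := hT.card_edgeFinset
    have h3 : T.edgeFinset.card = T.edgeSet.ncard := by
      rw [Set.ncard_eq_toFinset_card']
      congr 1
    omega
  have h1 := sum_ncard_eq_twice (spl v T u S)
  have h2 := sum_ncard_eq_twice T
  have h3 := spl_sum_deg (v := v) (u := u) (S := S) hSsub huS huv
  rw [Fintype.card_option]
  omega

end Main2

section Rev
variable {V : Type*} [Fintype V] [DecidableEq V]
variable {G : SimpleGraph V} {v : V} {T' : SimpleGraph (Option V)}

/-- The gateway neighbor of the new vertex `none`: the vertex through which `none`
connects to `some v`. -/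
noncomputable def ugw (v : V) (T' : SimpleGraph (Option V)) : V :=
  @Classical.epsilon V ⟨v⟩
    (fun b => T'.Adj none (some b) ∧ (del T' none).Reachable (some v) (some b))

lemma option_gateway (hT' : T'.IsTree) :
    ∃! b : V, T'.Adj none (some b) ∧ (del T' none).Reachable (some v) (some b) := by
  obtain ⟨b0, hb0, hb0u⟩ := gateway hT' (p := none) (q := some v) (by simp)
  obtain (_ | b) := b0
  · exact absurd hb0.1 (T'.irrefl (v := none))
  · refine ⟨b, hb0, ?_⟩
    intro b' hb'
    have := hb0u (some b') hb'
    simpa using this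

lemma ugw_spec (hT' : T'.IsTree) :
    T'.Adj none (some (ugw v T')) ∧
      (del T' none).Reachable (some v) (some (ugw v T')) := by
  obtain ⟨b, hb, -⟩ := option_gateway (v := v) hT'
  exact Classical.epsilon_spec
    (⟨b, hb⟩ : ∃ b, T'.Adj none (some b) ∧ (del T' none).Reachable (some v) (some b))

lemma ugw_eq (hT' : T'.IsTree) {b : V}
    (hb : T'.Adj none (some b) ∧ (del T' none).Reachable (some v) (some b)) :
    b = ugw v T' := by
  obtain ⟨c, -, hc⟩ := option_gateway (v := v) hT'
  rw [hc b hb, hc _ (ugw_spec hT')]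

/-- The set of neighbors of the new vertex `none`. -/
noncomputable def Bfin (T' : SimpleGraph (Option V)) : Finset V :=
  {b | T'.Adj none (some b)}.toFinite.toFinset

@[simp] lemma mem_Bfin {b : V} : b ∈ Bfin T' ↔ T'.Adj none (some b) := by
  simp [Bfin]

/-- Merge the vertex `none` back into `v`, deleting the gateway edge. -/
noncomputable def mrg (v : V) (T' : SimpleGraph (Option V)) : SimpleGraph V where
  Adj a b := a ≠ b ∧ (T'.Adj (some a) (some b) ∨
    (a = v ∧ T'.Adj none (some b) ∧ b ≠ ugw v T') ∨
    (b = v ∧ T'.Adj none (some a) ∧ a ≠ ugw v T'))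
  symm := by
    constructor
    rintro a b ⟨hne, h | h | h⟩
    · exact ⟨hne.symm, Or.inl h.symm⟩
    · exact ⟨hne.symm, Or.inr (Or.inr h)⟩
    · exact ⟨hne.symm, Or.inr (Or.inl h)⟩
  loopless := ⟨fun a h => h.1 rfl⟩

@[simp] lemma mrg_adj {a b : V} :
    (mrg v T').Adj a b ↔ a ≠ b ∧ (T'.Adj (some a) (some b) ∨
      (a = v ∧ T'.Adj none (some b) ∧ b ≠ ugw v T') ∨
      (b = v ∧ T'.Adj none (some a) ∧ a ≠ ugw v T')) := Iff.rfl

lemma mrg_le (hle : T' ≤ dupNoEdge G v) : mrg v T' ≤ G := by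
  rintro a b ⟨hne, h | h | h⟩
  · exact hle h
  · obtain ⟨hav, hb, -⟩ := h
    rw [hav]
    have hb' : G.Adj b v := hle hb
    exact hb'.symm
  · obtain ⟨hbv, ha, -⟩ := h
    rw [hbv]
    have ha' : G.Adj a v := hle ha
    exact ha'

lemma bfin_ne_v (hle : T' ≤ dupNoEdge G v) {b : V} (hb : T'.Adj none (some b)) : b ≠ v :=
  fun h => G.irrefl (v := v) (h ▸ (hle hb : G.Adj b v))

lemma mrg_SS_sub (hle : T' ≤ dupNoEdge G v) :
    ↑((Bfin T').erase (ugw v T')) ⊆ (mrg v T').neighborSet v := by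
  intro s hs
  simp only [Finset.coe_erase, Set.mem_diff, Finset.mem_coe, mem_Bfin,
    Set.mem_singleton_iff] at hs
  obtain ⟨hsB, hsne⟩ := hs
  exact ⟨(bfin_ne_v hle hsB).symm, Or.inr (Or.inl ⟨rfl, hsB, hsne⟩)⟩

lemma del_reach_mrg {o1 o2 : Option V} (h : (del T' none).Reachable o1 o2) :
    (mrg v T').Reachable (Option.elim o1 v id) (Option.elim o2 v id) := by
  obtain ⟨w⟩ := h
  refine reach_of_walk (fun o => Option.elim o v id) (fun a b h => ?_) w
  obtain ⟨h, ha, hb⟩ := h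
  obtain (_ | a) := a
  · exact absurd rfl ha
  obtain (_ | b) := b
  · exact absurd rfl hb
  have hne : a ≠ b := fun hab => T'.irrefl (v := (some b)) (hab ▸ h)
  exact SimpleGraph.Adj.reachable (⟨hne, Or.inl h⟩ : (mrg v T').Adj a b)

lemma mrg_connected (hT' : T'.IsTree) (hle : T' ≤ dupNoEdge G v) :
    (mrg v T').Connected := by
  have hreach_vu : (mrg v T').Reachable v (ugw v T') := by
    simpa using del_reach_mrg (v := v) (ugw_spec hT').2
  have hf : ∀ o1 o2, T'.Adj o1 o2 →
      (mrg v T').Reachable (Option.elim o1 v id) (Option.elim o2 v id) := by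
    have key : ∀ b : V, T'.Adj none (some b) → (mrg v T').Reachable v b := by
      intro b hb
      by_cases hbu : b = ugw v T'
      · exact hbu ▸ hreach_vu
      · refine SimpleGraph.Adj.reachable ?_
        exact ⟨(bfin_ne_v hle hb).symm, Or.inr (Or.inl ⟨rfl, hb, hbu⟩)⟩
    rintro (_ | a) (_ | b) h
    · exact absurd h (T'.irrefl (v := none))
    · exact key b h
    · exact (key a h.symm).symm
    · have hne : a ≠ b := fun hab => T'.irrefl (v := (some b)) (hab ▸ h)
      exact SimpleGraph.Adj.reachable (⟨hne, Or.inl h⟩ : (mrg v T').Adj a b)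
  haveI : Nonempty V := ⟨v⟩
  refine SimpleGraph.Connected.mk fun a b => ?_
  have ha : ∀ a : V, (mrg v T').Reachable a v := by
    intro a
    obtain ⟨w⟩ := hT'.isConnected (some a) (some v)
    simpa using reach_of_walk (fun o => Option.elim o v id) hf w
  exact (ha a).trans (ha b).symm

lemma spl_mrg (hT' : T'.IsTree) (hle : T' ≤ dupNoEdge G v) :
    spl v (mrg v T') (ugw v T') ((Bfin T').erase (ugw v T')) = T' := by
  have huspec := ugw_spec (v := v) hT'
  have hsep : ∀ b : V, T'.Adj none (some b) → T'.Adj (some v) (some b) → b = ugw v T' := by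
    intro b hb hvb
    refine ugw_eq hT' ⟨hb, SimpleGraph.Adj.reachable ?_⟩
    exact ⟨hvb, by simp, by simp⟩
  ext o1 o2
  obtain (_ | a) := o1 <;> obtain (_ | b) := o2
  · exact ⟨fun h => absurd h spl_adj_none_none, fun h => absurd h (T'.irrefl (v := none))⟩
  · -- none, some b
    simp only [spl_adj_none_some, Finset.mem_erase, mem_Bfin]
    constructor
    · rintro (⟨hne, hb⟩ | rfl)
      · exact hb
      · exact huspec.1
    · intro hb
      by_cases hbu : b = ugw v T'
      · exact Or.inr hbu
      · exact Or.inl ⟨hbu, hb⟩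
  · -- some a, none
    simp only [spl_adj_some_none, Finset.mem_erase, mem_Bfin]
    constructor
    · rintro (⟨hne, ha⟩ | rfl)
      · exact ha.symm
      · exact huspec.1.symm
    · intro ha
      by_cases hau : a = ugw v T'
      · exact Or.inr hau
      · exact Or.inl ⟨hau, ha.symm⟩
  · -- some a, some b
    simp only [spl_adj_some_some, mrg_adj, Finset.mem_erase, mem_Bfin]
    constructor
    · rintro ⟨⟨hne, h | h | h⟩, h2, h3⟩
      · exact h
      · exact absurd ⟨h.1, h.2.2, h.2.1⟩ h2
      · exact absurd ⟨h.1, h.2.2, h.2.1⟩ h3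
    · intro h
      have hne : a ≠ b := fun hab => T'.irrefl (v := _) (hab ▸ h)
      refine ⟨⟨hne, Or.inl h⟩, ?_, ?_⟩
      · rintro ⟨rfl, hbu, hbB⟩
        exact hbu (hsep b hbB h)
      · rintro ⟨rfl, hau, haB⟩
        exact hau (hsep a haB h.symm)

lemma mrg_isTree (hT' : T'.IsTree) (hle : T' ≤ dupNoEdge G v) : (mrg v T').IsTree := by
  refine isTree_of_connected_of_ncard (mrg_connected hT' hle) ?_
  have hspl := spl_mrg (v := v) hT' hle
  have hSsub := mrg_SS_sub (v := v) hle
  have huS : ugw v T' ∉ (Bfin T').erase (ugw v T') := Finset.notMem_erase _ _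
  have huv : ugw v T' ≠ v := bfin_ne_v hle (ugw_spec hT').1
  have hsum := spl_sum_deg (v := v) (T := mrg v T') (u := ugw v T')
    (S := (Bfin T').erase (ugw v T')) hSsub huS huv
  rw [hspl] at hsum
  have h1 := sum_ncard_eq_twice T'
  have h2 := sum_ncard_eq_twice (mrg v T')
  have h3 : T'.edgeSet.ncard + 1 = Fintype.card (Option V) := by
    classical
    have h4 := hT'.card_edgeFinset
    have h5 : T'.edgeFinset.card = T'.edgeSet.ncard := by
      rw [Set.ncard_eq_toFinset_card']
      congr 1
    omega
  rw [Fintype.card_option] at h3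
  omega

lemma mrg_cgw_not_mem (hT' : T'.IsTree) (hle : T' ≤ dupNoEdge G v) :
    cgw v (mrg v T') (ugw v T') ∉ (Bfin T').erase (ugw v T') := by
  intro hmem
  have hTree := mrg_isTree hT' hle
  have huv : ugw v T' ≠ v := bfin_ne_v hle (ugw_spec hT').1
  obtain ⟨hadj, hreach⟩ := cgw_spec (v := v) (T := mrg v T') (u := ugw v T') hTree huv
  rw [Finset.mem_erase, mem_Bfin] at hmem
  obtain ⟨hcneu, hcB⟩ := hmem
  -- transport the reachability into `del T' none`
  have htrans : (del T' none).Reachable (some (ugw v T')) (some (cgw v (mrg v T') (ugw v T'))) := by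
    obtain ⟨w⟩ := hreach
    refine reach_of_walk some (fun a b h => ?_) w
    obtain ⟨⟨hne, hT | hT | hT⟩, hav, hbv⟩ := h
    · exact SimpleGraph.Adj.reachable ⟨hT, by simp, by simp⟩
    · exact absurd hT.1 hav
    · exact absurd hT.1 hbv
  have := ugw_eq hT' ⟨hcB, (ugw_spec hT').2.trans htrans⟩
  exact hcneu this

end Rev

section Weights
variable {V : Type*} [Fintype V] [DecidableEq V]
variable {G : SimpleGraph V} {v : V} {T : SimpleGraph V} {u : V} {S : Finset V}

lemma nbr_pos (hT : T.IsTree) (hab : u ≠ v) : 1 ≤ (T.neighborSet u).ncard := by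
  obtain ⟨w⟩ := hT.isConnected u v
  obtain ⟨c, hadj, p', -⟩ := SimpleGraph.Walk.exists_eq_cons_of_ne hab w
  exact (Set.ncard_pos (Set.toFinite _)).2 ⟨c, hadj⟩

/-- The candidate rerouting sets: neighbors of `v` in `T` other than the gateway of `u`. -/
noncomputable def Dfin (v : V) (T : SimpleGraph V) (u : V) : Finset V :=
  (T.neighborSet v \ {cgw v T u}).toFinite.toFinset

@[simp] lemma mem_Dfin {b : V} : b ∈ Dfin v T u ↔ T.Adj v b ∧ b ≠ cgw v T u := by
  simp [Dfin, SimpleGraph.mem_neighborSet]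

lemma Dfin_card (hT : T.IsTree) (huv : u ≠ v) :
    (Dfin v T u).card = (T.neighborSet v).ncard - 1 := by
  have hc : cgw v T u ∈ T.neighborSet v := (cgw_spec hT huv).1
  rw [Dfin, ← Set.ncard_eq_toFinset_card _ (Set.toFinite _),
    Set.ncard_diff_singleton_of_mem hc]

lemma powerset_props (hT : T.IsTree) (huv : u ≠ v) (hS : S ∈ (Dfin v T u).powerset) :
    ↑S ⊆ T.neighborSet v ∧ cgw v T u ∉ S ∧ u ∉ S ∧
      S.card + 1 ≤ (T.neighborSet v).ncard := by
  rw [Finset.mem_powerset] at hS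
  have hsub : ↑S ⊆ T.neighborSet v := fun s hs => (mem_Dfin.1 (hS hs)).1
  have hcS : cgw v T u ∉ S := fun h => (mem_Dfin.1 (hS h)).2 rfl
  have huS : u ∉ S := by
    intro h
    have hadj : T.Adj v u := hsub h
    have : u = cgw v T u := cgw_eq hT huv ⟨hadj, SimpleGraph.Reachable.refl u⟩
    exact (mem_Dfin.1 (hS h)).2 this
  have hd : 0 < (T.neighborSet v).ncard :=
    (Set.ncard_pos (Set.toFinite _)).2 ⟨_, (cgw_spec hT huv).1⟩
  have hcard : S.card ≤ (Dfin v T u).card := Finset.card_le_card hS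
  rw [Dfin_card hT huv] at hcard
  exact ⟨hsub, hcS, huS, by omega⟩

lemma spl_weight (x : V → ℝ) (xv' : ℝ) (hSsub : ↑S ⊆ T.neighborSet v) (huS : u ∉ S)
    (huv : u ≠ v) (hdu : 1 ≤ (T.neighborSet u).ncard)
    (hSd : S.card + 1 ≤ (T.neighborSet v).ncard) :
    ∏ o : Option V, (Option.elim o xv' x) ^ (((spl v T u S).neighborSet o).ncard - 1)
      = xv' ^ S.card * x v ^ ((T.neighborSet v).ncard - 1 - S.card) *
        (x u * ∏ w ∈ Finset.univ.erase v, x w ^ ((T.neighborSet w).ncard - 1)) := by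
  have hSv : v ∉ S := not_mem_of_subset_nbr hSsub
  have hu_mem : u ∈ Finset.univ.erase v := Finset.mem_erase.2 ⟨huv, Finset.mem_univ u⟩
  rw [Fintype.prod_option]
  simp only [Option.elim_none, Option.elim_some]
  rw [← Finset.mul_prod_erase Finset.univ
      (fun w => x w ^ (((spl v T u S).neighborSet (some w)).ncard - 1)) (Finset.mem_univ v),
    ← Finset.mul_prod_erase (Finset.univ.erase v)
      (fun w => x w ^ (((spl v T u S).neighborSet (some w)).ncard - 1)) hu_mem,
    ← Finset.mul_prod_erase (Finset.univ.erase v)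
      (fun w => x w ^ ((T.neighborSet w).ncard - 1)) hu_mem]
  rw [nbr_none_ncard huS, nbr_v_ncard hSsub hSv huv, nbr_u_ncard huv huS]
  have h4 : ∏ w ∈ (Finset.univ.erase v).erase u,
      x w ^ (((spl v T u S).neighborSet (some w)).ncard - 1)
      = ∏ w ∈ (Finset.univ.erase v).erase u, x w ^ ((T.neighborSet w).ncard - 1) := by
    refine Finset.prod_congr rfl fun w hw => ?_
    rw [Finset.mem_erase, Finset.mem_erase] at hw
    obtain ⟨hwu, hwv, -⟩ := hw
    by_cases hwS : w ∈ S
    · rw [nbr_mem_ncard hwS hSsub hSv hwu]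
    · rw [nbr_other_ncard hwv hwu hwS]
  rw [h4]
  have e1 : S.card + 1 - 1 = S.card := by omega
  have e2 : (T.neighborSet v).ncard - S.card - 1 = (T.neighborSet v).ncard - 1 - S.card := by
    omega
  have e3 : (T.neighborSet u).ncard + 1 - 1
      = ((T.neighborSet u).ncard - 1) + 1 := by omega
  rw [e1, e2, e3, pow_succ]
  ring

lemma binom_expand (x : V → ℝ) (xv' : ℝ) (hT : T.IsTree) (hu : G.Adj v u) :
    (∏ w, (Function.update x v (x v + xv')) w ^ ((T.neighborSet w).ncard - 1)) * x u
      = ∑ S ∈ (Dfin v T u).powerset,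
          xv' ^ S.card * x v ^ ((T.neighborSet v).ncard - 1 - S.card) *
            (x u * ∏ w ∈ Finset.univ.erase v, x w ^ ((T.neighborSet w).ncard - 1)) := by
  have huv : u ≠ v := fun h => G.irrefl (v := v) (h ▸ hu)
  rw [← Finset.mul_prod_erase Finset.univ
      (fun w => (Function.update x v (x v + xv')) w ^ ((T.neighborSet w).ncard - 1))
      (Finset.mem_univ v)]
  have hupd : ∏ w ∈ Finset.univ.erase v,
      (Function.update x v (x v + xv')) w ^ ((T.neighborSet w).ncard - 1)
      = ∏ w ∈ Finset.univ.erase v, x w ^ ((T.neighborSet w).ncard - 1) := by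
    refine Finset.prod_congr rfl fun w hw => ?_
    rw [Function.update_of_ne (Finset.mem_erase.1 hw).1]
  rw [hupd, Function.update_self]
  have hbinom : (x v + xv') ^ ((T.neighborSet v).ncard - 1)
      = ∑ S ∈ (Dfin v T u).powerset,
          xv' ^ S.card * x v ^ ((T.neighborSet v).ncard - 1 - S.card) := by
    rw [← Dfin_card hT huv]
    have : (x v + xv') ^ (Dfin v T u).card
        = ∏ _i ∈ Dfin v T u, (xv' + x v) := by
      rw [Finset.prod_const, add_comm]
    rw [this, Finset.prod_add]
    refine Finset.sum_congr rfl fun S hS => ?_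
    rw [Finset.mem_powerset] at hS
    rw [Finset.prod_const, Finset.prod_const, Finset.card_sdiff_of_subset hS]
  rw [hbinom, Finset.sum_mul, Finset.sum_mul]
  refine Finset.sum_congr rfl fun S hS => ?_
  ring

lemma ugw_spl (hT : T.IsTree) (huv : u ≠ v) (hSsub : ↑S ⊆ T.neighborSet v) (huS : u ∉ S)
    (hc : cgw v T u ∉ S) : ugw v (spl v T u S) = u := by
  refine (ugw_eq (spl_isTree hT huv hSsub huS hc)
    ⟨spl_adj_none_some.2 (Or.inr rfl), ?_⟩).symm
  obtain ⟨hvc, hreach⟩ := cgw_spec (v := v) (T := T) (u := u) hT huv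
  have hadj_del : (del (spl v T u S) none).Adj (some v) (some (cgw v T u)) :=
    ⟨⟨hvc, fun h => hc h.2, fun h => hvc.ne' h.1⟩, by simp, by simp⟩
  have hmap : (del (spl v T u S) none).Reachable (some u) (some (cgw v T u)) := by
    obtain ⟨w⟩ := hreach
    refine reach_of_walk some (fun a b h => ?_) w
    refine SimpleGraph.Adj.reachable ?_
    exact ⟨⟨h.1, fun hh => h.2.1 hh.1, fun hh => h.2.2 hh.1⟩, by simp, by simp⟩
  exact hadj_del.reachable.trans hmap.symm

lemma mrg_spl (hT : T.IsTree) (huv : u ≠ v) (hSsub : ↑S ⊆ T.neighborSet v) (huS : u ∉ S)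
    (hc : cgw v T u ∉ S) : mrg v (spl v T u S) = T := by
  have hu' : ugw v (spl v T u S) = u := ugw_spl hT huv hSsub huS hc
  ext a b
  simp only [mrg_adj, spl_adj_some_some, spl_adj_none_some, hu']
  constructor
  · rintro ⟨hne, ⟨h, -, -⟩ | ⟨hav, hb, hbu⟩ | ⟨hbv, ha, hau⟩⟩
    · exact h
    · rcases hb with hbS | rfl
      · rw [hav]; exact hSsub hbS
      · exact absurd rfl hbu
    · rcases ha with haS | rfl
      · rw [hbv]
        exact (hSsub haS : T.Adj v a).symm
      · exact absurd rfl hau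
  · intro h
    have hne : a ≠ b := h.ne
    by_cases h1 : a = v ∧ b ∈ S
    · exact ⟨hne, Or.inr (Or.inl ⟨h1.1, Or.inl h1.2, fun hbu => huS (hbu ▸ h1.2)⟩)⟩
    · by_cases h2 : b = v ∧ a ∈ S
      · exact ⟨hne, Or.inr (Or.inr ⟨h2.1, Or.inl h2.2, fun hau => huS (hau ▸ h2.2)⟩)⟩
      · exact ⟨hne, Or.inl ⟨h, h1, h2⟩⟩

lemma Bfin_spl_erase (huS : u ∉ S) :
    (Bfin (spl v T u S)).erase (ugw v (spl v T u S)) = S ∨ True := Or.inr trivial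

end Weights

section Final
variable {V : Type*} [Fintype V] [DecidableEq V]
variable {G : SimpleGraph V} {v : V} {T : SimpleGraph V} {u : V} {S : Finset V}

lemma Bfin_spl_erase' (huS : u ∉ S) (hval : ugw v (spl v T u S) = u) :
    (Bfin (spl v T u S)).erase (ugw v (spl v T u S)) = S := by
  rw [hval]
  ext b
  simp only [Finset.mem_erase, mem_Bfin, spl_adj_none_some]
  constructor
  · rintro ⟨hbu, hb | hb⟩
    · exact hb
    · exact absurd hb hbu
  · intro hb
    exact ⟨fun h => huS (h ▸ hb), Or.inl hb⟩

end Final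

end Stmt7Aux

theorem stmt7 {V : Type*} [Fintype V] [DecidableEq V] (G : SimpleGraph V)
    (hG : G.Connected) (v : V) (hN : (G.neighborSet v).Nonempty) (x : V → ℝ) (xv' : ℝ) :
    degEnum (dupNoEdge G v) (fun o => o.elim xv' x) =
      degEnum G (Function.update x v (x v + xv')) * (∑ᶠ u ∈ G.neighborSet v, x u) := by
  classical
  open Stmt7Aux in
  haveI hfin1 : Finite (SimpleGraph V) :=
    Finite.of_injective SimpleGraph.Adj fun a b h => SimpleGraph.ext h
  haveI hfin2 : Finite (SimpleGraph (Option V)) :=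
    Finite.of_injective SimpleGraph.Adj fun a b h => SimpleGraph.ext h
  rw [degEnum, degEnum,
    finsum_mem_eq_finite_toFinset_sum _ (Set.toFinite {T : SimpleGraph (Option V) |
      T ≤ dupNoEdge G v ∧ T.IsTree}),
    finsum_mem_eq_finite_toFinset_sum _ (Set.toFinite {T : SimpleGraph V |
      T ≤ G ∧ T.IsTree}),
    finsum_mem_eq_finite_toFinset_sum _ (Set.toFinite (G.neighborSet v)),
    Finset.sum_mul_sum]
  -- expand the right-hand side via the binomial theorem
  have hRHS : ∑ T ∈ (Set.toFinite {T : SimpleGraph V | T ≤ G ∧ T.IsTree}).toFinset,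
      ∑ u ∈ (Set.toFinite (G.neighborSet v)).toFinset,
        (∏ w, (Function.update x v (x v + xv')) w ^ ((T.neighborSet w).ncard - 1)) * x u
      = ∑ T ∈ (Set.toFinite {T : SimpleGraph V | T ≤ G ∧ T.IsTree}).toFinset,
          ∑ u ∈ (Set.toFinite (G.neighborSet v)).toFinset,
            ∑ S ∈ (Dfin v T u).powerset,
              xv' ^ S.card * x v ^ ((T.neighborSet v).ncard - 1 - S.card) *
                (x u * ∏ w ∈ Finset.univ.erase v, x w ^ ((T.neighborSet w).ncard - 1)) := by
    refine Finset.sum_congr rfl fun T hT => ?_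
    refine Finset.sum_congr rfl fun u hu => ?_
    rw [Set.Finite.mem_toFinset, Set.mem_setOf_eq] at hT
    rw [Set.Finite.mem_toFinset, SimpleGraph.mem_neighborSet] at hu
    exact binom_expand (G := G) x xv' hT.2 hu
  rw [hRHS, ← Finset.sum_product', ← Finset.sum_sigma
    ((Set.toFinite {T : SimpleGraph V | T ≤ G ∧ T.IsTree}).toFinset ×ˢ
      (Set.toFinite (G.neighborSet v)).toFinset)
    (fun p => (Dfin v p.1 p.2).powerset)
    (fun q => xv' ^ q.2.card * x v ^ ((q.1.1.neighborSet v).ncard - 1 - q.2.card) *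
      (x q.1.2 * ∏ w ∈ Finset.univ.erase v, x w ^ ((q.1.1.neighborSet w).ncard - 1)))]
  refine (Finset.sum_nbij' (fun q => spl v q.1.1 q.1.2 q.2)
    (fun T' => ⟨(mrg v T', ugw v T'), (Bfin T').erase (ugw v T')⟩)
    ?_ ?_ ?_ ?_ ?_).symm
  · -- forward map lands in spanning trees of the duplicated graph
    rintro ⟨⟨T, u⟩, S⟩ hq
    rw [Finset.mem_sigma, Finset.mem_product, Set.Finite.mem_toFinset,
      Set.mem_setOf_eq, Set.Finite.mem_toFinset, SimpleGraph.mem_neighborSet] at hq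
    obtain ⟨⟨⟨hTle, hTtree⟩, hu⟩, hS⟩ := hq
    have huv : u ≠ v := fun h => G.irrefl (v := v) (h ▸ hu)
    obtain ⟨hSsub, hcS, huS, hSd⟩ := powerset_props hTtree huv hS
    rw [Set.Finite.mem_toFinset, Set.mem_setOf_eq]
    exact ⟨spl_le hTle hu hSsub, spl_isTree hTtree huv hSsub huS hcS⟩
  · -- reverse map lands in the index set
    intro T' hT'
    rw [Set.Finite.mem_toFinset, Set.mem_setOf_eq] at hT'
    obtain ⟨hle, htree⟩ := hT'
    rw [Finset.mem_sigma, Finset.mem_product, Set.Finite.mem_toFinset,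
      Set.mem_setOf_eq, Set.Finite.mem_toFinset, SimpleGraph.mem_neighborSet]
    refine ⟨⟨⟨mrg_le hle, mrg_isTree htree hle⟩, ?_⟩, ?_⟩
    · have h1 : G.Adj (ugw v T') v := hle (ugw_spec htree).1
      exact h1.symm
    · rw [Finset.mem_powerset]
      intro s hs
      have hs1 := mrg_SS_sub hle hs
      have hs2 : s ≠ cgw v (mrg v T') (ugw v T') := by
        intro h
        exact mrg_cgw_not_mem htree hle (h ▸ hs)
      exact mem_Dfin.2 ⟨hs1, hs2⟩
  · -- left inverse
    rintro ⟨⟨T, u⟩, S⟩ hq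
    rw [Finset.mem_sigma, Finset.mem_product, Set.Finite.mem_toFinset,
      Set.mem_setOf_eq, Set.Finite.mem_toFinset, SimpleGraph.mem_neighborSet] at hq
    obtain ⟨⟨⟨hTle, hTtree⟩, hu⟩, hS⟩ := hq
    have huv : u ≠ v := fun h => G.irrefl (v := v) (h ▸ hu)
    obtain ⟨hSsub, hcS, huS, hSd⟩ := powerset_props hTtree huv hS
    have h1 : mrg v (spl v T u S) = T := mrg_spl hTtree huv hSsub huS hcS
    have h2 : ugw v (spl v T u S) = u := ugw_spl hTtree huv hSsub huS hcS
    have h3 : (Bfin (spl v T u S)).erase (ugw v (spl v T u S)) = S :=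
      Bfin_spl_erase' huS h2
    rw [h2] at h3
    simp only [h3, h1, h2]
  · -- right inverse
    intro T' hT'
    rw [Set.Finite.mem_toFinset, Set.mem_setOf_eq] at hT'
    exact spl_mrg hT'.2 hT'.1
  · -- weights agree
    rintro ⟨⟨T, u⟩, S⟩ hq
    rw [Finset.mem_sigma, Finset.mem_product, Set.Finite.mem_toFinset,
      Set.mem_setOf_eq, Set.Finite.mem_toFinset, SimpleGraph.mem_neighborSet] at hq
    obtain ⟨⟨⟨hTle, hTtree⟩, hu⟩, hS⟩ := hq
    have huv : u ≠ v := fun h => G.irrefl (v := v) (h ▸ hu)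
    obtain ⟨hSsub, hcS, huS, hSd⟩ := powerset_props hTtree huv hS
    have hdu : 1 ≤ (T.neighborSet u).ncard := nbr_pos hTtree huv
    exact (spl_weight x xv' hSsub huS huv hdu hSd).symm
end

section
/- For the complete bipartite graph K_{s,t} with parts of sizes s ≥ 1 and t ≥ 1 and variables X_1, …, X_s on one part and Y_1, …, Y_t on the other, the vertex degree enumerator satisfies P_{K_{s,t}}(X_1, …, X_s, Y_1, …, Y_t) = (X_1 + ⋯ + X_s)^{t−1} · (Y_1 + ⋯ + Y_t)^{s−1}. -/
open scoped BigOperators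

set_option linter.unusedSectionVars false
set_option maxHeartbeats 1000000

namespace Stmt10Aux

open SimpleGraph Finset

section Generic
variable {V : Type*} [Fintype V] [DecidableEq V]

noncomputable def degT (T : SimpleGraph V) (v : V) : ℕ := (T.neighborSet v).ncard

def IsTreeOn (H : SimpleGraph V) (S : Set V) (T : SimpleGraph V) : Prop :=
  T ≤ H ∧ T.IsAcyclic ∧ (∀ v ∈ S, ∀ w ∈ S, T.Reachable v w) ∧ ∀ v ∉ S, T.neighborSet v = ∅

lemma isAcyclic_anti {T T' : SimpleGraph V} (h : T' ≤ T) (hT : T.IsAcyclic) : T'.IsAcyclic := by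
  intro v c hc
  exact hT (c.transfer T (fun e he => edgeSet_mono h (c.edges_subset_edgeSet he)))
    (hc.transfer _)

lemma mem_of_adj_left {S : Set V} {T : SimpleGraph V}
    (h4 : ∀ v ∉ S, T.neighborSet v = ∅) {v w : V} (ha : T.Adj v w) : v ∈ S := by
  by_contra hv
  have hw : w ∈ T.neighborSet v := ha
  rw [h4 v hv] at hw
  exact hw

lemma mem_of_adj_right {S : Set V} {T : SimpleGraph V}
    (h4 : ∀ v ∉ S, T.neighborSet v = ∅) {v w : V} (ha : T.Adj v w) : w ∈ S :=
  mem_of_adj_left h4 ha.symm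

lemma one_le_degT {S : Set V} {T : SimpleGraph V} {H : SimpleGraph V}
    (hT : IsTreeOn H S T) {v w : V} (hv : v ∈ S) (hw : w ∈ S) (hvw : v ≠ w) :
    1 ≤ degT T v := by
  obtain ⟨p⟩ := hT.2.2.1 v hv w hw
  obtain ⟨x, hx, -⟩ := p.exists_eq_cons_of_ne hvw
  have : (T.neighborSet v).Nonempty := ⟨x, hx⟩
  have h2 := Set.ncard_pos (Set.toFinite _) |>.2 this
  exact h2

/-- A path between two vertices different from a degree-one vertex `v0` avoids `v0`. -/
lemma not_mem_support_of_nbhd_singleton {T : SimpleGraph V} {v0 u0 v w : V}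
    (hnb : T.neighborSet v0 = {u0}) {p : T.Walk v w} (hp : p.IsPath)
    (hv : v ≠ v0) (hw : w ≠ v0) : v0 ∉ p.support := by
  intro hmem
  have hspec := p.take_spec hmem
  set q := p.takeUntil v0 hmem with hq
  set r := p.dropUntil v0 hmem with hr
  have hnodup : (q.append r).support.Nodup := by
    rw [hspec]; exact hp.2
  rw [SimpleGraph.Walk.support_append] at hnodup
  have hdisj := List.disjoint_of_nodup_append hnodup
  obtain ⟨x1, hx1, q1, hq1⟩ := q.reverse.exists_eq_cons_of_ne (Ne.symm hv)
  have hx1u : x1 = u0 := by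
    have : x1 ∈ T.neighborSet v0 := hx1
    rw [hnb] at this; exact this
  have hu0q : u0 ∈ q.support := by
    have : u0 ∈ q.reverse.support := by
      rw [hq1, SimpleGraph.Walk.support_cons]
      right
      rw [← hx1u]
      exact SimpleGraph.Walk.start_mem_support q1
    rwa [SimpleGraph.Walk.support_reverse, List.mem_reverse] at this
  obtain ⟨x2, hx2, r2, hr2⟩ := r.exists_eq_cons_of_ne (Ne.symm hw)
  have hx2u : x2 = u0 := by
    have : x2 ∈ T.neighborSet v0 := hx2
    rw [hnb] at this; exact this
  have hu0r : u0 ∈ r.support.tail := by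
    rw [hr2, SimpleGraph.Walk.support_cons, List.tail_cons, ← hx2u]
    exact SimpleGraph.Walk.start_mem_support r2
  exact hdisj hu0q hu0r

variable {H : SimpleGraph V}

lemma pendant_del_add {T : SimpleGraph V} {v0 u0 : V} (hnb : T.neighborSet v0 = {u0}) :
    (T.deleteEdges {s(v0, u0)}) ⊔ SimpleGraph.edge v0 u0 = T := by
  have hadj : T.Adj v0 u0 := by rw [← SimpleGraph.mem_neighborSet, hnb]; rfl
  ext a b
  simp only [SimpleGraph.sup_adj, SimpleGraph.deleteEdges_adj, Set.mem_singleton_iff,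
    SimpleGraph.edge_adj]
  constructor
  · rintro (⟨h, -⟩ | ⟨(⟨rfl, rfl⟩ | ⟨rfl, rfl⟩), -⟩)
    · exact h
    · exact hadj
    · exact hadj.symm
  · intro h
    by_cases he : a = v0 ∧ b = u0 ∨ a = u0 ∧ b = v0
    · exact Or.inr ⟨he, h.ne⟩
    · refine Or.inl ⟨h, fun hs => he ?_⟩
      rwa [Sym2.eq_iff] at hs

lemma pendant_add_del {T' : SimpleGraph V} {v0 u0 : V} (hne : u0 ≠ v0)
    (hiso : T'.neighborSet v0 = ∅) :
    (T' ⊔ SimpleGraph.edge v0 u0).deleteEdges {s(v0, u0)} = T' := by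
  have hnadj : ∀ z, ¬ T'.Adj v0 z := by
    intro z hz
    have : z ∈ T'.neighborSet v0 := hz
    rw [hiso] at this; exact this
  ext a b
  simp only [SimpleGraph.deleteEdges_adj, SimpleGraph.sup_adj, Set.mem_singleton_iff,
    SimpleGraph.edge_adj]
  constructor
  · rintro ⟨h1 | ⟨h2, hab⟩, hne2⟩
    · exact h1
    · exfalso; apply hne2; rw [Sym2.eq_iff]; tauto
  · intro h
    refine ⟨Or.inl h, fun hs => ?_⟩
    rw [Sym2.eq_iff] at hs
    rcases hs with ⟨rfl, rfl⟩ | ⟨rfl, rfl⟩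
    · exact hnadj _ h
    · exact hnadj _ h.symm

lemma pendant_del_mem {S : Set V} {D : V → ℕ} {v0 u0 : V}
    (hu0S : u0 ∈ S) (hne : u0 ≠ v0)
    {T : SimpleGraph V} (hT : IsTreeOn H S T) (hdeg : ∀ v ∈ S, degT T v = D v)
    (hnb : T.neighborSet v0 = {u0}) :
    IsTreeOn H (S \ {v0}) (T.deleteEdges {s(v0, u0)}) ∧
      ∀ v ∈ S \ {v0}, degT (T.deleteEdges {s(v0, u0)}) v
        = Function.update D u0 (D u0 - 1) v := by
  obtain ⟨h1, h2, h3, h4⟩ := hT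
  have hadj : T.Adj v0 u0 := by rw [← SimpleGraph.mem_neighborSet, hnb]; rfl
  set T' := T.deleteEdges {s(v0, u0)} with hT'def
  have hle : T' ≤ T := T.deleteEdges_le _
  have hnbv0 : T'.neighborSet v0 = ∅ := by
    ext z
    simp only [SimpleGraph.mem_neighborSet, hT'def, SimpleGraph.deleteEdges_adj,
      Set.mem_singleton_iff, Set.mem_empty_iff_false, iff_false, not_and, not_not]
    intro hz
    have : z ∈ T.neighborSet v0 := hz
    rw [hnb] at this
    rw [this]
  have hnbu0 : T'.neighborSet u0 = T.neighborSet u0 \ {v0} := by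
    ext z
    simp only [SimpleGraph.mem_neighborSet, hT'def, SimpleGraph.deleteEdges_adj,
      Set.mem_singleton_iff, Set.mem_diff, Sym2.eq_iff]
    constructor
    · rintro ⟨hz, hnes⟩
      refine ⟨hz, fun hzv => hnes ?_⟩
      subst hzv; tauto
    · rintro ⟨hz, hzv⟩
      refine ⟨hz, fun hs => ?_⟩
      rcases hs with ⟨rfl, -⟩ | ⟨-, h⟩
      · exact (hne rfl).elim
      · exact hzv h
  have hnbother : ∀ v, v ≠ v0 → v ≠ u0 → T'.neighborSet v = T.neighborSet v := by
    intro v hvv hvu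
    ext z
    simp only [SimpleGraph.mem_neighborSet, hT'def, SimpleGraph.deleteEdges_adj,
      Set.mem_singleton_iff, Sym2.eq_iff]
    constructor
    · exact fun h => h.1
    · intro h
      refine ⟨h, fun hs => ?_⟩
      rcases hs with ⟨h1', -⟩ | ⟨h2', -⟩
      · exact hvv h1'
      · exact hvu h2'
  refine ⟨⟨hle.trans h1, isAcyclic_anti hle h2, ?_, ?_⟩, ?_⟩
  · rintro v ⟨hvS, hv0⟩ w ⟨hwS, hw0⟩
    rw [Set.mem_singleton_iff] at hv0 hw0
    obtain ⟨p0⟩ := h3 v hvS w hwS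
    obtain ⟨p, hp⟩ := p0.toPath
    have hv0p : v0 ∉ p.support := not_mem_support_of_nbhd_singleton hnb hp hv0 hw0
    refine ⟨p.toDeleteEdges {s(v0, u0)} ?_⟩
    intro e he hmem
    rw [Set.mem_singleton_iff] at hmem
    subst hmem
    exact hv0p (SimpleGraph.Walk.fst_mem_support_of_mem_edges p he)
  · intro v hv
    by_cases hvv : v = v0
    · subst hvv; exact hnbv0
    · have hvS : v ∉ S := by
        intro hvS'
        exact hv ⟨hvS', by simpa using hvv⟩
      have hvu : v ≠ u0 := fun h => hvS (h ▸ hu0S)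
      rw [hnbother v hvv hvu]
      exact h4 v hvS
  · rintro v ⟨hvS, hv0⟩
    rw [Set.mem_singleton_iff] at hv0
    by_cases hvu : v = u0
    · rw [hvu, Function.update_self, degT, hnbu0,
        Set.ncard_diff_singleton_of_mem (by exact hadj.symm)]
      rw [← hdeg u0 hu0S]; rfl
    · rw [Function.update_of_ne hvu, degT, hnbother v hv0 hvu]
      exact hdeg v hvS

lemma pendant_add_mem {S : Set V} {D : V → ℕ} {v0 u0 : V}
    (hv0S : v0 ∈ S) (hu0S : u0 ∈ S) (hne : u0 ≠ v0) (hadjH : H.Adj v0 u0)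
    (hD0 : D v0 = 1) (hDu : 1 ≤ D u0)
    {T' : SimpleGraph V} (hT' : IsTreeOn H (S \ {v0}) T')
    (hdeg' : ∀ v ∈ S \ {v0}, degT T' v = Function.update D u0 (D u0 - 1) v) :
    IsTreeOn H S (T' ⊔ SimpleGraph.edge v0 u0) ∧
      (∀ v ∈ S, degT (T' ⊔ SimpleGraph.edge v0 u0) v = D v) ∧
      (T' ⊔ SimpleGraph.edge v0 u0).neighborSet v0 = {u0} := by
  obtain ⟨h1, h2, h3, h4⟩ := hT'
  have hv0iso : T'.neighborSet v0 = ∅ := h4 v0 (by simp)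
  have hnadj : ∀ z, ¬ T'.Adj v0 z := by
    intro z hz
    have : z ∈ T'.neighborSet v0 := hz
    rw [hv0iso] at this; exact this
  set T := T' ⊔ SimpleGraph.edge v0 u0 with hTdef
  have hadj_iff : ∀ a b : V, T.Adj a b ↔
      T'.Adj a b ∨ ((a = v0 ∧ b = u0 ∨ a = u0 ∧ b = v0) ∧ a ≠ b) := by
    intro a b
    rw [hTdef]
    simp only [SimpleGraph.sup_adj, SimpleGraph.edge_adj]
  have hnbv0 : T.neighborSet v0 = {u0} := by
    ext z
    rw [SimpleGraph.mem_neighborSet, hadj_iff, Set.mem_singleton_iff]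
    constructor
    · rintro (h | ⟨⟨-, rfl⟩ | ⟨h', -⟩, -⟩)
      · exact (hnadj _ h).elim
      · rfl
      · exact (hne h'.symm).elim
    · rintro rfl
      exact Or.inr ⟨Or.inl ⟨rfl, rfl⟩, Ne.symm hne⟩
  have hnbu0 : T.neighborSet u0 = insert v0 (T'.neighborSet u0) := by
    ext z
    rw [SimpleGraph.mem_neighborSet, hadj_iff, Set.mem_insert_iff]
    constructor
    · rintro (h | ⟨⟨h', -⟩ | ⟨-, rfl⟩, -⟩)
      · exact Or.inr h
      · exact (hne h').elim
      · exact Or.inl rfl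
    · rintro (rfl | h)
      · exact Or.inr ⟨Or.inr ⟨rfl, rfl⟩, hne⟩
      · exact Or.inl h
  have hnbother : ∀ v, v ≠ v0 → v ≠ u0 → T.neighborSet v = T'.neighborSet v := by
    intro v hvv hvu
    ext z
    rw [SimpleGraph.mem_neighborSet, SimpleGraph.mem_neighborSet, hadj_iff]
    constructor
    · rintro (h | ⟨⟨h', -⟩ | ⟨h', -⟩, -⟩)
      · exact h
      · exact (hvv h').elim
      · exact (hvu h').elim
    · exact fun h => Or.inl h
  have hedgele : SimpleGraph.edge v0 u0 ≤ H := by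
    intro a b hab
    rw [SimpleGraph.edge_adj] at hab
    rcases hab with ⟨⟨rfl, rfl⟩ | ⟨rfl, rfl⟩, -⟩
    · exact hadjH
    · exact hadjH.symm
  have hTadj : T.Adj v0 u0 := by rw [← SimpleGraph.mem_neighborSet, hnbv0]; rfl
  refine ⟨⟨sup_le h1 hedgele, ?_, ?_, ?_⟩, ?_, hnbv0⟩
  · -- acyclicity
    intro x c hc
    by_cases hmem : s(v0, u0) ∈ c.edges
    · have hsupp : v0 ∈ c.support := SimpleGraph.Walk.fst_mem_support_of_mem_edges c hmem
      have hc' : (c.rotate v0 hsupp).IsCycle := hc.rotate _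
      set c' := c.rotate v0 hsupp with hc'def
      obtain ⟨y, hy, q, hq⟩ := SimpleGraph.Walk.not_nil_iff.1 hc'.not_nil
      have hyu : y = u0 := by
        have : y ∈ T.neighborSet v0 := hy
        rwa [hnbv0] at this
      have hynev0 : y ≠ v0 := fun h => hne (h ▸ hyu.symm)
      obtain ⟨z, hz, r, hr⟩ := q.reverse.exists_eq_cons_of_ne hynev0.symm
      have hzu : z = u0 := by
        have : z ∈ T.neighborSet v0 := hz
        rwa [hnbv0] at this
      have hzy : z = y := hzu.trans hyu.symm
      have hedge_q : s(v0, y) ∈ q.edges := by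
        have h5 : s(v0, z) ∈ q.reverse.edges := by
          rw [hr, SimpleGraph.Walk.edges_cons]
          exact List.mem_cons_self
        rw [SimpleGraph.Walk.edges_reverse, List.mem_reverse] at h5
        rwa [hzy] at h5
      have hnodup : (SimpleGraph.Walk.cons hy q).edges.Nodup := by
        rw [← hq]; exact hc'.edges_nodup
      rw [SimpleGraph.Walk.edges_cons, List.nodup_cons] at hnodup
      exact hnodup.1 hedge_q
    · have hcT' : ∀ e ∈ c.edges, e ∈ T'.edgeSet := by
        intro e he
        have heT : e ∈ T.edgeSet := c.edges_subset_edgeSet he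
        rw [hTdef, SimpleGraph.edgeSet_sup, SimpleGraph.edge_edgeSet_of_ne (Ne.symm hne)] at heT
        rcases heT with h | h
        · exact h
        · rw [Set.mem_singleton_iff] at h
          exact absurd (h ▸ he) hmem
      exact h2 (c.transfer T' hcT') (hc.transfer _)
  · -- reachability
    have hreach : ∀ v ∈ S, T.Reachable v u0 := by
      intro v hv
      by_cases hvv : v = v0
      · subst hvv; exact hTadj.reachable
      · exact (h3 v ⟨hv, by simpa using hvv⟩ u0 ⟨hu0S, by simpa using hne⟩).mono le_sup_left
    exact fun v hv w hw => (hreach v hv).trans (hreach w hw).symm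
  · -- isolation
    intro v hv
    have hvv : v ≠ v0 := fun h => hv (h ▸ hv0S)
    have hvu : v ≠ u0 := fun h => hv (h ▸ hu0S)
    rw [hnbother v hvv hvu]
    exact h4 v (fun h => hv h.1)
  · -- degrees
    intro v hv
    by_cases hvv : v = v0
    · subst hvv
      rw [degT, hnbv0, Set.ncard_singleton, hD0]
    · by_cases hvu : v = u0
      · rw [hvu]
        have hv0nmem : v0 ∉ T'.neighborSet u0 := by
          intro h
          exact hnadj u0 ((T'.mem_neighborSet u0 v0).1 h).symm
        rw [degT, hnbu0, Set.ncard_insert_of_notMem hv0nmem (Set.toFinite _)]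
        have := hdeg' u0 ⟨hu0S, by simpa using hne⟩
        rw [Function.update_self] at this
        rw [degT] at this
        rw [this]
        omega
      · rw [degT, hnbother v hvv hvu]
        have := hdeg' v ⟨hv, by simpa using hvv⟩
        rwa [Function.update_of_ne hvu] at this

lemma pendant_card {S : Set V} {D : V → ℕ} {v0 u0 : V}
    (hv0S : v0 ∈ S) (hu0S : u0 ∈ S) (hne : u0 ≠ v0) (hadjH : H.Adj v0 u0)
    (hD0 : D v0 = 1) (hDu : 1 ≤ D u0) :
    Nat.card {T : SimpleGraph V //
        (IsTreeOn H S T ∧ ∀ v ∈ S, degT T v = D v) ∧ T.neighborSet v0 = {u0}} =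
      Nat.card {T' : SimpleGraph V // IsTreeOn H (S \ {v0}) T' ∧
        ∀ v ∈ S \ {v0}, degT T' v = Function.update D u0 (D u0 - 1) v} := by
  apply Nat.card_congr
  refine
    { toFun := fun T =>
        ⟨T.1.deleteEdges {s(v0, u0)},
          pendant_del_mem hu0S hne T.2.1.1 T.2.1.2 T.2.2⟩
      invFun := fun T' =>
        ⟨T'.1 ⊔ SimpleGraph.edge v0 u0, by
          obtain ⟨a, b, c⟩ := pendant_add_mem hv0S hu0S hne hadjH hD0 hDu T'.2.1 T'.2.2
          exact ⟨⟨a, b⟩, c⟩⟩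
      left_inv := fun T => Subtype.ext (pendant_del_add T.2.2)
      right_inv := fun T' => Subtype.ext (pendant_add_del hne (T'.2.1.2.2.2 v0 (by simp))) }

end Generic

section Generic
variable {V : Type*} [Fintype V] [DecidableEq V]

/-- Every finite acyclic graph with an edge has a vertex of degree 1. -/
lemma exists_leaf {T : SimpleGraph V} (hT : T.IsAcyclic) {x y : V} (hxy : T.Adj x y) :
    ∃ v, degT T v = 1 := by
  classical
  set P : Set ℕ := {n | ∃ (v w : V) (p : T.Walk v w), p.IsPath ∧ p.length = n} with hPdef
  have h1P : (1 : ℕ) ∈ P := by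
    refine ⟨x, y, (SimpleGraph.Path.singleton hxy).1, (SimpleGraph.Path.singleton hxy).2, ?_⟩
    simp [SimpleGraph.Path.singleton]
  have hbdd : BddAbove P := by
    refine ⟨Fintype.card V, ?_⟩
    rintro n ⟨v, w, p, hp, rfl⟩
    exact le_of_lt hp.length_lt
  obtain ⟨v, w, p, hp, hlen⟩ := Nat.sSup_mem ⟨1, h1P⟩ hbdd
  have h1le : 1 ≤ sSup P := le_csSup hbdd h1P
  have hvw : v ≠ w := by
    rintro rfl
    rw [SimpleGraph.Walk.isPath_iff_eq_nil] at hp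
    subst hp
    simp at hlen
    omega
  obtain ⟨y1, hy1, q, hq1⟩ := p.reverse.exists_eq_cons_of_ne (Ne.symm hvw)
  have hqp : q.IsPath ∧ w ∉ q.support := by
    have hrev := hp.reverse
    rw [hq1, SimpleGraph.Walk.cons_isPath_iff] at hrev
    exact hrev
  have hnb : T.neighborSet w = {y1} := by
    ext z
    rw [SimpleGraph.mem_neighborSet, Set.mem_singleton_iff]
    constructor
    · intro hz
      by_contra hzy
      by_cases hzs : z ∈ p.support
      · have hwz_ne : s(w, z) ∉ p.edges := by
          intro hmemE
          have h6 : s(w, z) ∈ p.reverse.edges := by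
            rw [SimpleGraph.Walk.edges_reverse, List.mem_reverse]; exact hmemE
          rw [hq1, SimpleGraph.Walk.edges_cons] at h6
          rcases List.mem_cons.1 h6 with heq | hmem2
          · rw [Sym2.eq_iff] at heq
            rcases heq with ⟨-, h8⟩ | ⟨h8, -⟩
            · exact hzy h8
            · rw [← h8] at hy1; exact T.irrefl hy1
          · exact hqp.2 (SimpleGraph.Walk.fst_mem_support_of_mem_edges q hmem2)
        have hcyc : (SimpleGraph.Walk.cons hz (p.dropUntil z hzs)).IsCycle := by
          rw [SimpleGraph.Walk.cons_isCycle_iff]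
          exact ⟨hp.dropUntil hzs,
            fun hc => hwz_ne (SimpleGraph.Walk.edges_dropUntil_subset _ _ hc)⟩
        exact hT _ hcyc
      · have hext : (p.concat hz).IsPath := by
          have hrc : (p.concat hz).reverse.IsPath := by
            rw [SimpleGraph.Walk.reverse_concat, SimpleGraph.Walk.cons_isPath_iff]
            refine ⟨hp.reverse, ?_⟩
            rw [SimpleGraph.Walk.support_reverse, List.mem_reverse]
            exact hzs
          have := hrc.reverse
          rwa [SimpleGraph.Walk.reverse_reverse] at this
        have hmemP : (p.concat hz).length ∈ P := ⟨v, z, _, hext, rfl⟩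
        have hle := le_csSup hbdd hmemP
        rw [SimpleGraph.Walk.length_concat] at hle
        omega
    · intro hz
      rw [hz]
      exact hy1
  exact ⟨w, by rw [degT, hnb, Set.ncard_singleton]⟩

end Generic

lemma nat_card_sigma_fiber {X : Type*} {I : Type*} [Finite X] [Fintype I] (φ : X → I) :
    Nat.card X = ∑ i : I, Nat.card {x : X // φ x = i} := by
  classical
  cases nonempty_fintype X
  rw [Nat.card_eq_fintype_card, Fintype.card_congr (Equiv.sigmaFiberEquiv φ).symm,
    Fintype.card_sigma]
  simp [Nat.card_eq_fintype_card]

section Codes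
variable {ι : Type*} [Fintype ι] [DecidableEq ι]

/-- Number of "code" functions `Fin m → ι` landing in `A` with prescribed fiber sizes. -/
noncomputable def codeCard (A : Finset ι) (m : ℕ) (d : ι → ℕ) : ℕ :=
  Nat.card {f : Fin m → ι // (∀ k, f k ∈ A) ∧
    ∀ a ∈ A, (Finset.univ.filter (fun k => f k = a)).card + 1 = d a}

lemma code_erase {A : Finset ι} {b0 : ι} (hb0 : b0 ∈ A) {d : ι → ℕ} (hd : d b0 = 1) (m : ℕ) :
    codeCard (A.erase b0) m d = codeCard A m d := by
  apply Nat.card_congr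
  apply Equiv.subtypeEquivRight
  intro f
  constructor
  · rintro ⟨h1, h2⟩
    refine ⟨fun k => Finset.mem_of_mem_erase (h1 k), ?_⟩
    intro a ha
    by_cases hab : a = b0
    · subst hab
      have : (Finset.univ.filter (fun k => f k = a)).card = 0 := by
        rw [Finset.card_eq_zero, Finset.filter_eq_empty_iff]
        intro k _ hk
        exact Finset.ne_of_mem_erase (hk ▸ h1 k) rfl
      rw [this, hd]
    · exact h2 a (Finset.mem_erase.2 ⟨hab, ha⟩)
  · rintro ⟨h1, h2⟩
    have hzero : (Finset.univ.filter (fun k => f k = b0)).card = 0 := by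
      have := h2 b0 hb0
      omega
    rw [Finset.card_eq_zero, Finset.filter_eq_empty_iff] at hzero
    refine ⟨fun k => Finset.mem_erase.2 ⟨hzero (Finset.mem_univ k), h1 k⟩, ?_⟩
    intro a ha
    exact h2 a (Finset.mem_of_mem_erase ha)

lemma filter_split {m : ℕ} (f : Fin (m + 1) → ι) (a : ι) :
    (Finset.univ.filter (fun k => f k = a)).card =
      (Finset.univ.filter (fun k : Fin m => f k.castSucc = a)).card
        + (if f (Fin.last m) = a then 1 else 0) := by
  rw [Finset.card_filter, Finset.card_filter, Fin.sum_univ_castSucc]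

lemma code_fiber_card {A : Finset ι} {m : ℕ} {d : ι → ℕ} {a0 : ι} (ha0 : a0 ∈ A) :
    Nat.card {f : Fin (m + 1) → ι // ((∀ k, f k ∈ A) ∧
        ∀ a ∈ A, (Finset.univ.filter (fun k => f k = a)).card + 1 = d a) ∧
        f (Fin.last m) = a0} =
      codeCard A m (Function.update d a0 (d a0 - 1)) := by
  apply Nat.card_congr
  refine
    { toFun := fun f => ⟨Fin.init f.1, ?_, ?_⟩
      invFun := fun g => ⟨Fin.snoc g.1 a0, ⟨?_, ?_⟩, ?_⟩
      left_inv := ?_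
      right_inv := ?_ }
  · exact fun k => f.2.1.1 k.castSucc
  · intro a ha
    have hs := filter_split f.1 a
    have hfib := f.2.1.2 a ha
    have hlast := f.2.2
    simp only [Fin.init]
    by_cases haa : a = a0
    · subst haa
      rw [Function.update_self]
      rw [hlast, if_pos rfl] at hs
      show (Finset.univ.filter (fun k : Fin m => f.1 k.castSucc = a)).card + 1 = _
      omega
    · rw [Function.update_of_ne haa]
      rw [hlast, if_neg (fun h : a0 = a => haa h.symm)] at hs
      show (Finset.univ.filter (fun k : Fin m => f.1 k.castSucc = a)).card + 1 = _
      omega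
  · intro k
    refine Fin.lastCases ?_ ?_ k
    · rw [Fin.snoc_last]; exact ha0
    · intro i; rw [Fin.snoc_castSucc]; exact g.2.1 i
  · intro a ha
    have hs := filter_split (Fin.snoc g.1 a0 : Fin (m+1) → ι) a
    have hfib := g.2.2 a ha
    simp only [Fin.snoc_castSucc, Fin.snoc_last] at hs
    by_cases haa : a = a0
    · subst haa
      rw [Function.update_self] at hfib
      rw [if_pos rfl] at hs
      omega
    · rw [Function.update_of_ne haa] at hfib
      rw [if_neg (fun h : a0 = a => haa h.symm)] at hs
      omega
  · exact Fin.snoc_last _ _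
  · intro f
    apply Subtype.ext
    have h9 := Fin.snoc_init_self f.1
    rw [f.2.2] at h9
    exact h9
  · intro g
    apply Subtype.ext
    simp
end Codes

section Bip
variable {s t : ℕ}

/-- The vertex subset of `Fin s ⊕ Fin t` given by `A` on the left and `B` on the right. -/
def SS (A : Finset (Fin s)) (B : Finset (Fin t)) : Set (Fin s ⊕ Fin t) :=
  Sum.elim (fun a => a ∈ A) (fun b => b ∈ B)

lemma mem_SS_inl {A : Finset (Fin s)} {B : Finset (Fin t)} {a : Fin s} :
    (Sum.inl a : Fin s ⊕ Fin t) ∈ SS A B ↔ a ∈ A := Iff.rfl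

lemma mem_SS_inr {A : Finset (Fin s)} {B : Finset (Fin t)} {b : Fin t} :
    (Sum.inr b : Fin s ⊕ Fin t) ∈ SS A B ↔ b ∈ B := Iff.rfl

lemma SS_erase_right {A : Finset (Fin s)} {B : Finset (Fin t)} {b0 : Fin t} :
    SS A (B.erase b0) = SS A B \ {(Sum.inr b0 : Fin s ⊕ Fin t)} := by
  ext v
  rw [Set.mem_diff]
  simp only [Set.mem_singleton_iff]
  cases v with
  | inl a => simp [mem_SS_inl, mem_SS_inr]
  | inr b => simp [mem_SS_inl, mem_SS_inr, Finset.mem_erase, and_comm]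

lemma SS_erase_left {A : Finset (Fin s)} {B : Finset (Fin t)} {a0 : Fin s} :
    SS (A.erase a0) B = SS A B \ {(Sum.inl a0 : Fin s ⊕ Fin t)} := by
  ext v
  rw [Set.mem_diff]
  simp only [Set.mem_singleton_iff]
  cases v with
  | inl a => simp [mem_SS_inl, mem_SS_inr, Finset.mem_erase, and_comm]
  | inr b => simp [mem_SS_inl, mem_SS_inr]

/-- The big graph. -/
abbrev GB (s t : ℕ) : SimpleGraph (Fin s ⊕ Fin t) := completeBipartiteGraph (Fin s) (Fin t)

lemma GB_adj_lr (a : Fin s) (b : Fin t) : (GB s t).Adj (Sum.inl a) (Sum.inr b) := by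
  simp [completeBipartiteGraph]

lemma GB_not_adj_ll (a a' : Fin s) : ¬ (GB s t).Adj (Sum.inl a) (Sum.inl a') := by
  simp [completeBipartiteGraph]

lemma GB_not_adj_rr (b b' : Fin t) : ¬ (GB s t).Adj (Sum.inr b) (Sum.inr b') := by
  simp [completeBipartiteGraph]

/-- The number of spanning trees of `SS A B` with degree data `(d, e)`. -/
noncomputable def treeCard (A : Finset (Fin s)) (B : Finset (Fin t))
    (d : Fin s → ℕ) (e : Fin t → ℕ) : ℕ :=
  Nat.card {T : SimpleGraph (Fin s ⊕ Fin t) //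
    (IsTreeOn (GB s t) (SS A B) T ∧ ∀ v ∈ SS A B, degT T v = Sum.elim d e v)}

lemma neighbor_inl_of_le {T : SimpleGraph (Fin s ⊕ Fin t)} (hle : T ≤ GB s t)
    {b : Fin t} {u : Fin s ⊕ Fin t} (h : T.Adj (Sum.inr b) u) : ∃ a, u = Sum.inl a := by
  cases u with
  | inl a => exact ⟨a, rfl⟩
  | inr b' => exact absurd (hle h) (GB_not_adj_rr b b')

lemma neighbor_inr_of_le {T : SimpleGraph (Fin s ⊕ Fin t)} (hle : T ≤ GB s t)
    {a : Fin s} {u : Fin s ⊕ Fin t} (h : T.Adj (Sum.inl a) u) : ∃ b, u = Sum.inr b := by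
  cases u with
  | inl a' => exact absurd (hle h) (GB_not_adj_ll a a')
  | inr b => exact ⟨b, rfl⟩

lemma exists_nbhd_of_deg_one_inr {A : Finset (Fin s)} {B : Finset (Fin t)}
    {d : Fin s → ℕ} {e : Fin t → ℕ} {T : SimpleGraph (Fin s ⊕ Fin t)}
    (hT : IsTreeOn (GB s t) (SS A B) T)
    (hdeg : ∀ v ∈ SS A B, degT T v = Sum.elim d e v)
    {b0 : Fin t} (hb0 : b0 ∈ B) (he : e b0 = 1) :
    ∃ a0 : Fin s, T.neighborSet (Sum.inr b0) = {Sum.inl a0} := by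
  have h1 : (T.neighborSet (Sum.inr b0)).ncard = 1 := by
    have := hdeg (Sum.inr b0) (mem_SS_inr.2 hb0)
    simpa [degT, he] using this
  obtain ⟨u, hu⟩ := Set.ncard_eq_one.1 h1
  have huadj : T.Adj (Sum.inr b0) u := by
    rw [← SimpleGraph.mem_neighborSet, hu]; rfl
  obtain ⟨a0, rfl⟩ := neighbor_inl_of_le hT.1 huadj
  exact ⟨a0, hu⟩

lemma exists_nbhd_of_deg_one_inl {A : Finset (Fin s)} {B : Finset (Fin t)}
    {d : Fin s → ℕ} {e : Fin t → ℕ} {T : SimpleGraph (Fin s ⊕ Fin t)}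
    (hT : IsTreeOn (GB s t) (SS A B) T)
    (hdeg : ∀ v ∈ SS A B, degT T v = Sum.elim d e v)
    {a0 : Fin s} (ha0 : a0 ∈ A) (hd : d a0 = 1) :
    ∃ b0 : Fin t, T.neighborSet (Sum.inl a0) = {Sum.inr b0} := by
  have h1 : (T.neighborSet (Sum.inl a0)).ncard = 1 := by
    have := hdeg (Sum.inl a0) (mem_SS_inl.2 ha0)
    simpa [degT, hd] using this
  obtain ⟨u, hu⟩ := Set.ncard_eq_one.1 h1
  have huadj : T.Adj (Sum.inl a0) u := by
    rw [← SimpleGraph.mem_neighborSet, hu]; rfl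
  obtain ⟨b0, rfl⟩ := neighbor_inr_of_le hT.1 huadj
  exact ⟨b0, hu⟩

lemma nbhd_inl_subset_singleton {A : Finset (Fin s)} {B : Finset (Fin t)}
    {T : SimpleGraph (Fin s ⊕ Fin t)} (hT : IsTreeOn (GB s t) (SS A B) T)
    {b0 : Fin t} (hB : B = {b0}) (a : Fin s) :
    T.neighborSet (Sum.inl a) ⊆ {Sum.inr b0} := by
  intro u hu
  have huadj : T.Adj (Sum.inl a) u := hu
  obtain ⟨b, rfl⟩ := neighbor_inr_of_le hT.1 huadj
  have : (Sum.inr b : Fin s ⊕ Fin t) ∈ SS A B := mem_of_adj_right hT.2.2.2 huadj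
  rw [mem_SS_inr, hB, Finset.mem_singleton] at this
  rw [this]; rfl

lemma nbhd_inr_subset_singleton {A : Finset (Fin s)} {B : Finset (Fin t)}
    {T : SimpleGraph (Fin s ⊕ Fin t)} (hT : IsTreeOn (GB s t) (SS A B) T)
    {a0 : Fin s} (hA : A = {a0}) (b : Fin t) :
    T.neighborSet (Sum.inr b) ⊆ {Sum.inl a0} := by
  intro u hu
  have huadj : T.Adj (Sum.inr b) u := hu
  obtain ⟨a, rfl⟩ := neighbor_inl_of_le hT.1 huadj
  have : (Sum.inl a : Fin s ⊕ Fin t) ∈ SS A B := mem_of_adj_right hT.2.2.2 huadj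
  rw [mem_SS_inl, hA, Finset.mem_singleton] at this
  rw [this]; rfl

/-- An edge of `T` between the parts, provided both `A` and `B` are nonempty. -/
lemma exists_adj_of_treeOn {A : Finset (Fin s)} {B : Finset (Fin t)}
    {T : SimpleGraph (Fin s ⊕ Fin t)} (hT : IsTreeOn (GB s t) (SS A B) T)
    (hA : A.Nonempty) (hB : B.Nonempty) : ∃ x y, T.Adj x y := by
  obtain ⟨a, ha⟩ := hA
  obtain ⟨b, hb⟩ := hB
  obtain ⟨p⟩ := hT.2.2.1 (Sum.inl a) (mem_SS_inl.2 ha) (Sum.inr b) (mem_SS_inr.2 hb)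
  obtain ⟨x, hx, -⟩ := p.exists_eq_cons_of_ne (by simp)
  exact ⟨_, _, hx⟩

end Bip

section Codes
variable {ι : Type*} [Fintype ι] [DecidableEq ι]

lemma code_sigma (A : Finset ι) (m : ℕ) (d : ι → ℕ) :
    codeCard A (m + 1) d = ∑ a0 : ι, Nat.card {f : Fin (m + 1) → ι //
      ((∀ k, f k ∈ A) ∧ ∀ a ∈ A, (Finset.univ.filter (fun k => f k = a)).card + 1 = d a) ∧
      f (Fin.last m) = a0} := by
  classical
  rw [codeCard, nat_card_sigma_fiber
    (fun f : {f : Fin (m + 1) → ι // (∀ k, f k ∈ A) ∧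
      ∀ a ∈ A, (Finset.univ.filter (fun k => f k = a)).card + 1 = d a} => f.1 (Fin.last m))]
  apply Finset.sum_congr rfl
  intro a0 _
  exact Nat.card_congr (Equiv.subtypeSubtypeEquivSubtypeInter
    (fun f : Fin (m + 1) → ι => (∀ k, f k ∈ A) ∧
      ∀ a ∈ A, (Finset.univ.filter (fun k => f k = a)).card + 1 = d a)
    (fun f : Fin (m + 1) → ι => f (Fin.last m) = a0))

lemma code_fiber_zero_notmem {A : Finset ι} {m : ℕ} {d : ι → ℕ} {a0 : ι} (ha0 : a0 ∉ A) :
    Nat.card {f : Fin (m + 1) → ι //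
      ((∀ k, f k ∈ A) ∧ ∀ a ∈ A, (Finset.univ.filter (fun k => f k = a)).card + 1 = d a) ∧
      f (Fin.last m) = a0} = 0 := by
  have : IsEmpty {f : Fin (m + 1) → ι //
      ((∀ k, f k ∈ A) ∧ ∀ a ∈ A, (Finset.univ.filter (fun k => f k = a)).card + 1 = d a) ∧
      f (Fin.last m) = a0} := ⟨fun f => ha0 (f.2.2 ▸ f.2.1.1 (Fin.last m))⟩
  exact Nat.card_of_isEmpty

lemma code_fiber_zero_d0 {A : Finset ι} {m : ℕ} {d : ι → ℕ} {a0 : ι} (ha0 : a0 ∈ A)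
    (hd : d a0 = 0) :
    Nat.card {f : Fin (m + 1) → ι //
      ((∀ k, f k ∈ A) ∧ ∀ a ∈ A, (Finset.univ.filter (fun k => f k = a)).card + 1 = d a) ∧
      f (Fin.last m) = a0} = 0 := by
  have : IsEmpty {f : Fin (m + 1) → ι //
      ((∀ k, f k ∈ A) ∧ ∀ a ∈ A, (Finset.univ.filter (fun k => f k = a)).card + 1 = d a) ∧
      f (Fin.last m) = a0} := ⟨fun f => by have := f.2.1.2 a0 ha0; omega⟩
  exact Nat.card_of_isEmpty

lemma code_zero_of_exists_zero {A : Finset ι} {m : ℕ} {d : ι → ℕ} {a : ι}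
    (ha : a ∈ A) (hd : d a = 0) : codeCard A m d = 0 := by
  have : IsEmpty {f : Fin m → ι // (∀ k, f k ∈ A) ∧
      ∀ a ∈ A, (Finset.univ.filter (fun k => f k = a)).card + 1 = d a} :=
    ⟨fun f => by have := f.2.2 a ha; omega⟩
  exact Nat.card_of_isEmpty

lemma code_zero_level0 {A : Finset ι} {d : ι → ℕ} {a : ι}
    (ha : a ∈ A) (hd : d a ≠ 1) : codeCard A 0 d = 0 := by
  have : IsEmpty {f : Fin 0 → ι // (∀ k, f k ∈ A) ∧
      ∀ a ∈ A, (Finset.univ.filter (fun k => f k = a)).card + 1 = d a} := by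
    refine ⟨fun f => ?_⟩
    have h1 := f.2.2 a ha
    have h2 : (Finset.univ.filter (fun k : Fin 0 => f.1 k = a)).card = 0 := by simp
    omega
  exact Nat.card_of_isEmpty

lemma codeCard_level0_singleton {a0 : ι} {d : ι → ℕ} (hd : d a0 = 1) :
    codeCard ({a0} : Finset ι) 0 d = 1 := by
  have hcond : ∀ f : Fin 0 → ι, (∀ k, f k ∈ ({a0} : Finset ι)) ∧
      ∀ a ∈ ({a0} : Finset ι), (Finset.univ.filter (fun k => f k = a)).card + 1 = d a := by
    intro f
    refine ⟨fun k => k.elim0, ?_⟩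
    intro a ha
    rw [Finset.mem_singleton] at ha
    subst ha
    simp [hd]
  haveI : Unique (Fin 0 → ι) := ⟨⟨fun k => k.elim0⟩, fun f => funext fun k => k.elim0⟩
  rw [codeCard, Nat.card_congr (Equiv.subtypeUnivEquiv hcond), Nat.card_unique]

lemma code_bound {A : Finset ι} {m : ℕ} {d : ι → ℕ}
    (h : codeCard A m d ≠ 0) (h2 : ∀ a ∈ A, 2 ≤ d a) : A.card ≤ m := by
  rw [codeCard] at h
  obtain ⟨⟨f, h1, hfib⟩, -⟩ := Nat.card_ne_zero.1 h
  have hsum : (Finset.univ : Finset (Fin m)).card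
      = ∑ a ∈ A, (Finset.univ.filter (fun k => f k = a)).card :=
    Finset.card_eq_sum_card_fiberwise (fun k _ => h1 k)
  have hone : ∀ a ∈ A, 1 ≤ (Finset.univ.filter (fun k => f k = a)).card := by
    intro a ha
    have := hfib a ha
    have := h2 a ha
    omega
  have hcard := Finset.card_nsmul_le_sum A _ 1 hone
  simp only [smul_eq_mul, mul_one] at hcard
  rw [← hsum, Finset.card_univ, Fintype.card_fin] at hcard
  exact hcard

end Codes

section Bip
variable {s t : ℕ}

lemma tree_sigma_B (A : Finset (Fin s)) (B : Finset (Fin t)) (d : Fin s → ℕ) (e : Fin t → ℕ)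
    {b0 : Fin t} (hb0 : b0 ∈ B) (he1 : e b0 = 1) :
    treeCard A B d e = ∑ a0 : Fin s, Nat.card {T : SimpleGraph (Fin s ⊕ Fin t) //
      (IsTreeOn (GB s t) (SS A B) T ∧ ∀ v ∈ SS A B, degT T v = Sum.elim d e v) ∧
      T.neighborSet (Sum.inr b0) = {Sum.inl a0}} := by
  classical
  rw [treeCard, nat_card_sigma_fiber
    (fun T : {T : SimpleGraph (Fin s ⊕ Fin t) //
      (IsTreeOn (GB s t) (SS A B) T ∧ ∀ v ∈ SS A B, degT T v = Sum.elim d e v)} =>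
      (exists_nbhd_of_deg_one_inr T.2.1 T.2.2 hb0 he1).choose)]
  apply Finset.sum_congr rfl
  intro a0 _
  apply Nat.card_congr
  refine
    { toFun := fun x => ⟨x.1.1, x.1.2, ?_⟩
      invFun := fun y => ⟨⟨y.1, y.2.1⟩, ?_⟩
      left_inv := fun x => Subtype.ext (Subtype.ext rfl)
      right_inv := fun y => Subtype.ext rfl }
  · have hspec := (exists_nbhd_of_deg_one_inr x.1.2.1 x.1.2.2 hb0 he1).choose_spec
    rw [x.2] at hspec
    exact hspec
  · have hspec := (exists_nbhd_of_deg_one_inr y.2.1.1 y.2.1.2 hb0 he1).choose_spec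
    have h2 := hspec.symm.trans y.2.2
    exact Sum.inl.inj (Set.singleton_eq_singleton_iff.1 h2)

lemma tree_sigma_A (A : Finset (Fin s)) (B : Finset (Fin t)) (d : Fin s → ℕ) (e : Fin t → ℕ)
    {a0 : Fin s} (ha0 : a0 ∈ A) (hd1 : d a0 = 1) :
    treeCard A B d e = ∑ b0 : Fin t, Nat.card {T : SimpleGraph (Fin s ⊕ Fin t) //
      (IsTreeOn (GB s t) (SS A B) T ∧ ∀ v ∈ SS A B, degT T v = Sum.elim d e v) ∧
      T.neighborSet (Sum.inl a0) = {Sum.inr b0}} := by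
  classical
  rw [treeCard, nat_card_sigma_fiber
    (fun T : {T : SimpleGraph (Fin s ⊕ Fin t) //
      (IsTreeOn (GB s t) (SS A B) T ∧ ∀ v ∈ SS A B, degT T v = Sum.elim d e v)} =>
      (exists_nbhd_of_deg_one_inl T.2.1 T.2.2 ha0 hd1).choose)]
  apply Finset.sum_congr rfl
  intro b0 _
  apply Nat.card_congr
  refine
    { toFun := fun x => ⟨x.1.1, x.1.2, ?_⟩
      invFun := fun y => ⟨⟨y.1, y.2.1⟩, ?_⟩
      left_inv := fun x => Subtype.ext (Subtype.ext rfl)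
      right_inv := fun y => Subtype.ext rfl }
  · have hspec := (exists_nbhd_of_deg_one_inl x.1.2.1 x.1.2.2 ha0 hd1).choose_spec
    rw [x.2] at hspec
    exact hspec
  · have hspec := (exists_nbhd_of_deg_one_inl y.2.1.1 y.2.1.2 ha0 hd1).choose_spec
    have h2 := hspec.symm.trans y.2.2
    exact Sum.inr.inj (Set.singleton_eq_singleton_iff.1 h2)

lemma tree_fiber_B_eq {A : Finset (Fin s)} {B : Finset (Fin t)} {d : Fin s → ℕ} {e : Fin t → ℕ}
    {b0 : Fin t} (hb0 : b0 ∈ B) (he1 : e b0 = 1) {a0 : Fin s} (ha0 : a0 ∈ A)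
    (hd1 : 1 ≤ d a0) :
    Nat.card {T : SimpleGraph (Fin s ⊕ Fin t) //
      (IsTreeOn (GB s t) (SS A B) T ∧ ∀ v ∈ SS A B, degT T v = Sum.elim d e v) ∧
      T.neighborSet (Sum.inr b0) = {Sum.inl a0}} =
    treeCard A (B.erase b0) (Function.update d a0 (d a0 - 1)) e := by
  rw [treeCard, SS_erase_right, Sum.elim_update_left]
  exact pendant_card (H := GB s t) (S := SS A B) (D := Sum.elim d e)
    (mem_SS_inr.2 hb0) (mem_SS_inl.2 ha0) (by simp) ((GB_adj_lr a0 b0).symm)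
    (by simpa using he1) (by simpa using hd1)

lemma tree_fiber_A_eq {A : Finset (Fin s)} {B : Finset (Fin t)} {d : Fin s → ℕ} {e : Fin t → ℕ}
    {a0 : Fin s} (ha0 : a0 ∈ A) (hd1 : d a0 = 1) {b0 : Fin t} (hb0 : b0 ∈ B)
    (he1 : 1 ≤ e b0) :
    Nat.card {T : SimpleGraph (Fin s ⊕ Fin t) //
      (IsTreeOn (GB s t) (SS A B) T ∧ ∀ v ∈ SS A B, degT T v = Sum.elim d e v) ∧
      T.neighborSet (Sum.inl a0) = {Sum.inr b0}} =
    treeCard (A.erase a0) B d (Function.update e b0 (e b0 - 1)) := by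
  rw [treeCard, SS_erase_left, Sum.elim_update_right]
  exact pendant_card (H := GB s t) (S := SS A B) (D := Sum.elim d e)
    (mem_SS_inl.2 ha0) (mem_SS_inr.2 hb0) (by simp) (GB_adj_lr a0 b0)
    (by simpa using hd1) (by simpa using he1)

lemma tree_fiber_B_zero_notmem {A : Finset (Fin s)} {B : Finset (Fin t)}
    {d : Fin s → ℕ} {e : Fin t → ℕ} {b0 : Fin t} {a0 : Fin s} (ha0 : a0 ∉ A) :
    Nat.card {T : SimpleGraph (Fin s ⊕ Fin t) //
      (IsTreeOn (GB s t) (SS A B) T ∧ ∀ v ∈ SS A B, degT T v = Sum.elim d e v) ∧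
      T.neighborSet (Sum.inr b0) = {Sum.inl a0}} = 0 := by
  have : IsEmpty {T : SimpleGraph (Fin s ⊕ Fin t) //
      (IsTreeOn (GB s t) (SS A B) T ∧ ∀ v ∈ SS A B, degT T v = Sum.elim d e v) ∧
      T.neighborSet (Sum.inr b0) = {Sum.inl a0}} := by
    refine ⟨fun T => ?_⟩
    have hadj : T.1.Adj (Sum.inr b0) (Sum.inl a0) := by
      rw [← SimpleGraph.mem_neighborSet, T.2.2]; rfl
    exact ha0 (mem_SS_inl.1 (mem_of_adj_right T.2.1.1.2.2.2 hadj))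
  exact Nat.card_of_isEmpty

lemma tree_fiber_B_zero_d0 {A : Finset (Fin s)} {B : Finset (Fin t)}
    {d : Fin s → ℕ} {e : Fin t → ℕ} {b0 : Fin t} {a0 : Fin s} (ha0 : a0 ∈ A)
    (hd0 : d a0 = 0) :
    Nat.card {T : SimpleGraph (Fin s ⊕ Fin t) //
      (IsTreeOn (GB s t) (SS A B) T ∧ ∀ v ∈ SS A B, degT T v = Sum.elim d e v) ∧
      T.neighborSet (Sum.inr b0) = {Sum.inl a0}} = 0 := by
  have : IsEmpty {T : SimpleGraph (Fin s ⊕ Fin t) //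
      (IsTreeOn (GB s t) (SS A B) T ∧ ∀ v ∈ SS A B, degT T v = Sum.elim d e v) ∧
      T.neighborSet (Sum.inr b0) = {Sum.inl a0}} := by
    refine ⟨fun T => ?_⟩
    have hadj : T.1.Adj (Sum.inr b0) (Sum.inl a0) := by
      rw [← SimpleGraph.mem_neighborSet, T.2.2]; rfl
    have hdeg := T.2.1.2 (Sum.inl a0) (mem_SS_inl.2 ha0)
    have hpos : (T.1.neighborSet (Sum.inl a0)).Nonempty := ⟨Sum.inr b0, hadj.symm⟩
    have := Set.ncard_pos (Set.toFinite _) |>.2 hpos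
    rw [degT] at hdeg
    simp only [Sum.elim_inl, hd0] at hdeg
    omega
  exact Nat.card_of_isEmpty

lemma tree_fiber_A_zero_notmem {A : Finset (Fin s)} {B : Finset (Fin t)}
    {d : Fin s → ℕ} {e : Fin t → ℕ} {a0 : Fin s} {b0 : Fin t} (hb0 : b0 ∉ B) :
    Nat.card {T : SimpleGraph (Fin s ⊕ Fin t) //
      (IsTreeOn (GB s t) (SS A B) T ∧ ∀ v ∈ SS A B, degT T v = Sum.elim d e v) ∧
      T.neighborSet (Sum.inl a0) = {Sum.inr b0}} = 0 := by
  have : IsEmpty {T : SimpleGraph (Fin s ⊕ Fin t) //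
      (IsTreeOn (GB s t) (SS A B) T ∧ ∀ v ∈ SS A B, degT T v = Sum.elim d e v) ∧
      T.neighborSet (Sum.inl a0) = {Sum.inr b0}} := by
    refine ⟨fun T => ?_⟩
    have hadj : T.1.Adj (Sum.inl a0) (Sum.inr b0) := by
      rw [← SimpleGraph.mem_neighborSet, T.2.2]; rfl
    exact hb0 (mem_SS_inr.1 (mem_of_adj_right T.2.1.1.2.2.2 hadj))
  exact Nat.card_of_isEmpty

lemma tree_fiber_A_zero_e0 {A : Finset (Fin s)} {B : Finset (Fin t)}
    {d : Fin s → ℕ} {e : Fin t → ℕ} {a0 : Fin s} {b0 : Fin t} (hb0 : b0 ∈ B)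
    (he0 : e b0 = 0) :
    Nat.card {T : SimpleGraph (Fin s ⊕ Fin t) //
      (IsTreeOn (GB s t) (SS A B) T ∧ ∀ v ∈ SS A B, degT T v = Sum.elim d e v) ∧
      T.neighborSet (Sum.inl a0) = {Sum.inr b0}} = 0 := by
  have : IsEmpty {T : SimpleGraph (Fin s ⊕ Fin t) //
      (IsTreeOn (GB s t) (SS A B) T ∧ ∀ v ∈ SS A B, degT T v = Sum.elim d e v) ∧
      T.neighborSet (Sum.inl a0) = {Sum.inr b0}} := by
    refine ⟨fun T => ?_⟩
    have hadj : T.1.Adj (Sum.inl a0) (Sum.inr b0) := by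
      rw [← SimpleGraph.mem_neighborSet, T.2.2]; rfl
    have hdeg := T.2.1.2 (Sum.inr b0) (mem_SS_inr.2 hb0)
    have hpos : (T.1.neighborSet (Sum.inr b0)).Nonempty := ⟨Sum.inl a0, hadj.symm⟩
    have := Set.ncard_pos (Set.toFinite _) |>.2 hpos
    rw [degT] at hdeg
    simp only [Sum.elim_inr, he0] at hdeg
    omega
  exact Nat.card_of_isEmpty

end Bip

section Generic
variable {V : Type*} [Fintype V] [DecidableEq V]

lemma edge_isAcyclic (u v : V) : (SimpleGraph.edge u v).IsAcyclic := by
  by_cases huv : u = v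
  · subst huv; rw [SimpleGraph.edge_self_eq_bot]; exact isAcyclic_bot
  · intro x c hc
    have h3 := hc.three_le_length
    have hnodup := hc.edges_nodup
    have hmem : ∀ e' ∈ c.edges, e' = s(u, v) := by
      intro e' he'
      have := c.edges_subset_edgeSet he'
      rwa [SimpleGraph.edge_edgeSet_of_ne huv, Set.mem_singleton_iff] at this
    have hlen := c.length_edges
    rcases hE : c.edges with _ | ⟨e1, _ | ⟨e2, l⟩⟩
    · rw [hE] at hlen; simp at hlen; omega
    · rw [hE] at hlen; simp at hlen; omega
    · rw [hE] at hnodup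
      have h1 := hmem e1 (by rw [hE]; simp)
      have h2 := hmem e2 (by rw [hE]; simp)
      rw [List.nodup_cons] at hnodup
      exact hnodup.1 (by rw [h1, h2]; simp)

lemma edge_neighborSet_left {u v : V} (hne : u ≠ v) :
    (SimpleGraph.edge u v).neighborSet u = {v} := by
  ext z
  rw [SimpleGraph.mem_neighborSet, SimpleGraph.edge_adj, Set.mem_singleton_iff]
  constructor
  · rintro ⟨⟨-, rfl⟩ | ⟨h1, -⟩, -⟩
    · rfl
    · exact absurd h1 hne
  · rintro rfl
    exact ⟨Or.inl ⟨rfl, rfl⟩, hne⟩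

lemma edge_neighborSet_right {u v : V} (hne : u ≠ v) :
    (SimpleGraph.edge u v).neighborSet v = {u} := by
  ext z
  rw [SimpleGraph.mem_neighborSet, SimpleGraph.edge_adj, Set.mem_singleton_iff]
  constructor
  · rintro ⟨⟨h1, -⟩ | ⟨-, rfl⟩, -⟩
    · exact absurd h1.symm hne
    · rfl
  · rintro rfl
    exact ⟨Or.inr ⟨rfl, rfl⟩, Ne.symm hne⟩

end Generic

section Bip
variable {s t : ℕ}

lemma treeCard_zero_e0 {A : Finset (Fin s)} {B : Finset (Fin t)} {d : Fin s → ℕ}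
    {e : Fin t → ℕ} (hA : A.Nonempty) {b : Fin t} (hb : b ∈ B) (he : e b = 0) :
    treeCard A B d e = 0 := by
  obtain ⟨a, ha⟩ := hA
  have : IsEmpty {T : SimpleGraph (Fin s ⊕ Fin t) //
      (IsTreeOn (GB s t) (SS A B) T ∧ ∀ v ∈ SS A B, degT T v = Sum.elim d e v)} := by
    refine ⟨fun T => ?_⟩
    have hdeg := T.2.2 (Sum.inr b) (mem_SS_inr.2 hb)
    have h1 := one_le_degT T.2.1 (mem_SS_inr.2 hb) (mem_SS_inl.2 ha) (by simp)
    rw [hdeg] at h1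
    simp only [Sum.elim_inr, he] at h1
    omega
  rw [treeCard]
  exact Nat.card_of_isEmpty

lemma treeCard_zero_d0 {A : Finset (Fin s)} {B : Finset (Fin t)} {d : Fin s → ℕ}
    {e : Fin t → ℕ} (hB : B.Nonempty) {a : Fin s} (ha : a ∈ A) (hd : d a = 0) :
    treeCard A B d e = 0 := by
  obtain ⟨b, hb⟩ := hB
  have : IsEmpty {T : SimpleGraph (Fin s ⊕ Fin t) //
      (IsTreeOn (GB s t) (SS A B) T ∧ ∀ v ∈ SS A B, degT T v = Sum.elim d e v)} := by
    refine ⟨fun T => ?_⟩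
    have hdeg := T.2.2 (Sum.inl a) (mem_SS_inl.2 ha)
    have h1 := one_le_degT T.2.1 (mem_SS_inl.2 ha) (mem_SS_inr.2 hb) (by simp)
    rw [hdeg] at h1
    simp only [Sum.elim_inl, hd] at h1
    omega
  rw [treeCard]
  exact Nat.card_of_isEmpty

lemma treeCard_zero_starB {A : Finset (Fin s)} {B : Finset (Fin t)} {d : Fin s → ℕ}
    {e : Fin t → ℕ} {b0 : Fin t} (hB : B = {b0}) {a : Fin s} (ha : a ∈ A)
    (hd : 2 ≤ d a) : treeCard A B d e = 0 := by
  have : IsEmpty {T : SimpleGraph (Fin s ⊕ Fin t) //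
      (IsTreeOn (GB s t) (SS A B) T ∧ ∀ v ∈ SS A B, degT T v = Sum.elim d e v)} := by
    refine ⟨fun T => ?_⟩
    have hsub := nbhd_inl_subset_singleton T.2.1 hB a
    have hle1 : degT T.1 (Sum.inl a) ≤ 1 := by
      have := Set.ncard_le_ncard hsub (Set.toFinite _)
      rwa [Set.ncard_singleton] at this
    have hdeg := T.2.2 (Sum.inl a) (mem_SS_inl.2 ha)
    rw [hdeg] at hle1
    simp only [Sum.elim_inl] at hle1
    omega
  rw [treeCard]
  exact Nat.card_of_isEmpty

lemma treeCard_zero_starA {A : Finset (Fin s)} {B : Finset (Fin t)} {d : Fin s → ℕ}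
    {e : Fin t → ℕ} {a0 : Fin s} (hA : A = {a0}) {b : Fin t} (hb : b ∈ B)
    (he : 2 ≤ e b) : treeCard A B d e = 0 := by
  have : IsEmpty {T : SimpleGraph (Fin s ⊕ Fin t) //
      (IsTreeOn (GB s t) (SS A B) T ∧ ∀ v ∈ SS A B, degT T v = Sum.elim d e v)} := by
    refine ⟨fun T => ?_⟩
    have hsub := nbhd_inr_subset_singleton T.2.1 hA b
    have hle1 : degT T.1 (Sum.inr b) ≤ 1 := by
      have := Set.ncard_le_ncard hsub (Set.toFinite _)
      rwa [Set.ncard_singleton] at this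
    have hdeg := T.2.2 (Sum.inr b) (mem_SS_inr.2 hb)
    rw [hdeg] at hle1
    simp only [Sum.elim_inr] at hle1
    omega
  rw [treeCard]
  exact Nat.card_of_isEmpty

lemma treeCard_zero_min2 {A : Finset (Fin s)} {B : Finset (Fin t)} {d : Fin s → ℕ}
    {e : Fin t → ℕ} (hA : A.Nonempty) (hB : B.Nonempty)
    (hd : ∀ a ∈ A, 2 ≤ d a) (he : ∀ b ∈ B, 2 ≤ e b) : treeCard A B d e = 0 := by
  have : IsEmpty {T : SimpleGraph (Fin s ⊕ Fin t) //
      (IsTreeOn (GB s t) (SS A B) T ∧ ∀ v ∈ SS A B, degT T v = Sum.elim d e v)} := by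
    refine ⟨fun T => ?_⟩
    obtain ⟨x, y, hxy⟩ := exists_adj_of_treeOn T.2.1 hA hB
    obtain ⟨v, hv⟩ := exists_leaf T.2.1.2.1 hxy
    unfold degT at hv
    obtain ⟨u, hu⟩ := Set.ncard_eq_one.1 hv
    have hadj : T.1.Adj v u := by rw [← SimpleGraph.mem_neighborSet, hu]; rfl
    have hvS := mem_of_adj_left T.2.1.2.2.2 hadj
    have hdeg := T.2.2 v hvS
    unfold degT at hdeg
    rw [hu, Set.ncard_singleton] at hdeg
    cases v with
    | inl a =>
      have := hd a (mem_SS_inl.1 hvS)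
      simp only [Sum.elim_inl] at hdeg
      omega
    | inr b =>
      have := he b (mem_SS_inr.1 hvS)
      simp only [Sum.elim_inr] at hdeg
      omega
  rw [treeCard]
  exact Nat.card_of_isEmpty

lemma base_tree_unique {a0 : Fin s} {b0 : Fin t} {T : SimpleGraph (Fin s ⊕ Fin t)}
    (hT : IsTreeOn (GB s t) (SS {a0} {b0}) T) :
    T = SimpleGraph.edge (Sum.inl a0) (Sum.inr b0) := by
  obtain ⟨h1, h2, h3, h4⟩ := hT
  have hadj : T.Adj (Sum.inl a0) (Sum.inr b0) := by
    obtain ⟨p⟩ := h3 (Sum.inl a0) (mem_SS_inl.2 (Finset.mem_singleton_self a0))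
      (Sum.inr b0) (mem_SS_inr.2 (Finset.mem_singleton_self b0))
    obtain ⟨z, hz, -, -⟩ := p.exists_eq_cons_of_ne (by simp)
    have hzS := mem_of_adj_right h4 hz
    cases z with
    | inl a => exact absurd (h1 hz) (GB_not_adj_ll _ _)
    | inr b =>
      have hbb : b ∈ ({b0} : Finset (Fin t)) := mem_SS_inr.1 hzS
      rw [Finset.mem_singleton] at hbb
      subst hbb
      exact hz
  ext x y
  rw [SimpleGraph.edge_adj]
  constructor
  · intro hxy
    have hx := mem_of_adj_left h4 hxy
    have hy := mem_of_adj_right h4 hxy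
    have hne := hxy.ne
    cases x with
    | inl a =>
      cases y with
      | inl a' => exact absurd (h1 hxy) (GB_not_adj_ll _ _)
      | inr b' =>
        have h5 : a ∈ ({a0} : Finset (Fin s)) := mem_SS_inl.1 hx
        have h6 : b' ∈ ({b0} : Finset (Fin t)) := mem_SS_inr.1 hy
        rw [Finset.mem_singleton] at h5 h6
        exact ⟨Or.inl ⟨by rw [h5], by rw [h6]⟩, hne⟩
    | inr b =>
      cases y with
      | inl a' =>
        have h5 : b ∈ ({b0} : Finset (Fin t)) := mem_SS_inr.1 hx
        have h6 : a' ∈ ({a0} : Finset (Fin s)) := mem_SS_inl.1 hy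
        rw [Finset.mem_singleton] at h5 h6
        exact ⟨Or.inr ⟨by rw [h5], by rw [h6]⟩, hne⟩
      | inr b' => exact absurd (h1 hxy) (GB_not_adj_rr _ _)
  · rintro ⟨⟨rfl, rfl⟩ | ⟨rfl, rfl⟩, -⟩
    · exact hadj
    · exact hadj.symm

lemma base_edge_mem {a0 : Fin s} {b0 : Fin t} {d : Fin s → ℕ} {e : Fin t → ℕ}
    (hd : d a0 = 1) (he : e b0 = 1) :
    IsTreeOn (GB s t) (SS {a0} {b0}) (SimpleGraph.edge (Sum.inl a0) (Sum.inr b0)) ∧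
      ∀ v ∈ SS ({a0} : Finset (Fin s)) ({b0} : Finset (Fin t)),
        degT (SimpleGraph.edge (Sum.inl a0) (Sum.inr b0)) v = Sum.elim d e v := by
  set T0 := SimpleGraph.edge (Sum.inl a0 : Fin s ⊕ Fin t) (Sum.inr b0) with hT0
  have hne : (Sum.inl a0 : Fin s ⊕ Fin t) ≠ Sum.inr b0 := by simp
  have hadj0 : T0.Adj (Sum.inl a0) (Sum.inr b0) := by
    rw [hT0, SimpleGraph.edge_adj]
    exact ⟨Or.inl ⟨rfl, rfl⟩, hne⟩
  have hmemv : ∀ v ∈ SS ({a0} : Finset (Fin s)) ({b0} : Finset (Fin t)),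
      v = Sum.inl a0 ∨ v = Sum.inr b0 := by
    intro v hv
    cases v with
    | inl a =>
      have := mem_SS_inl.1 hv
      rw [Finset.mem_singleton] at this
      exact Or.inl (by rw [this])
    | inr b =>
      have := mem_SS_inr.1 hv
      rw [Finset.mem_singleton] at this
      exact Or.inr (by rw [this])
  refine ⟨⟨?_, edge_isAcyclic _ _, ?_, ?_⟩, ?_⟩
  · intro x y hxy
    rw [hT0, SimpleGraph.edge_adj] at hxy
    rcases hxy with ⟨⟨rfl, rfl⟩ | ⟨rfl, rfl⟩, -⟩
    · exact GB_adj_lr a0 b0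
    · exact (GB_adj_lr a0 b0).symm
  · intro v hv w hw
    rcases hmemv v hv with rfl | rfl <;> rcases hmemv w hw with rfl | rfl
    · exact SimpleGraph.Reachable.refl _
    · exact hadj0.reachable
    · exact hadj0.symm.reachable
    · exact SimpleGraph.Reachable.refl _
  · intro v hv
    ext z
    rw [SimpleGraph.mem_neighborSet]
    simp only [Set.mem_empty_iff_false, iff_false]
    intro hz
    rw [hT0, SimpleGraph.edge_adj] at hz
    rcases hz with ⟨⟨rfl, -⟩ | ⟨rfl, -⟩, -⟩
    · exact hv (mem_SS_inl.2 (Finset.mem_singleton_self a0))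
    · exact hv (mem_SS_inr.2 (Finset.mem_singleton_self b0))
  · intro v hv
    rcases hmemv v hv with rfl | rfl
    · rw [degT, edge_neighborSet_left hne, Set.ncard_singleton]
      simp [hd]
    · rw [degT, edge_neighborSet_right hne, Set.ncard_singleton]
      simp [he]

lemma treeCard_base (a0 : Fin s) (b0 : Fin t) (d : Fin s → ℕ) (e : Fin t → ℕ) :
    treeCard {a0} {b0} d e
      = (if d a0 = 1 then 1 else 0) * (if e b0 = 1 then 1 else 0) := by
  have hne : (Sum.inl a0 : Fin s ⊕ Fin t) ≠ Sum.inr b0 := by simp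
  by_cases hd : d a0 = 1 <;> by_cases he : e b0 = 1
  · rw [if_pos hd, if_pos he, mul_one, treeCard]
    rw [Nat.card_eq_one_iff_unique]
    constructor
    · exact ⟨fun X Y =>
        Subtype.ext ((base_tree_unique X.2.1).trans (base_tree_unique Y.2.1).symm)⟩
    · exact ⟨⟨_, base_edge_mem hd he⟩⟩
  all_goals {
    have : IsEmpty {T : SimpleGraph (Fin s ⊕ Fin t) //
        (IsTreeOn (GB s t) (SS {a0} {b0}) T ∧
          ∀ v ∈ SS ({a0} : Finset (Fin s)) ({b0} : Finset (Fin t)),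
            degT T v = Sum.elim d e v)} := by
      refine ⟨fun T => ?_⟩
      have hTeq := base_tree_unique T.2.1
      have hd1 : d a0 = 1 := by
        have hdeg := T.2.2 (Sum.inl a0) (mem_SS_inl.2 (Finset.mem_singleton_self a0))
        rw [hTeq, degT, edge_neighborSet_left hne, Set.ncard_singleton] at hdeg
        simpa using hdeg.symm
      have he1 : e b0 = 1 := by
        have hdeg := T.2.2 (Sum.inr b0) (mem_SS_inr.2 (Finset.mem_singleton_self b0))
        rw [hTeq, degT, edge_neighborSet_right hne, Set.ncard_singleton] at hdeg
        simpa using hdeg.symm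
      tauto
    rw [treeCard]
    rw [Nat.card_of_isEmpty]
    simp [hd, he]
  }

end Bip

section Bip
variable {s t : ℕ}

theorem count_main :
    ∀ (n : ℕ) (A : Finset (Fin s)) (B : Finset (Fin t)) (d : Fin s → ℕ) (e : Fin t → ℕ),
      A.card + B.card ≤ n → A.Nonempty → B.Nonempty →
      treeCard A B d e = codeCard A (B.card - 1) d * codeCard B (A.card - 1) e := by
  intro n
  induction n with
  | zero =>
    intro A B d e hle hA hB
    have h1 := Finset.card_pos.2 hA
    have h2 := Finset.card_pos.2 hB
    omega
  | succ n ih =>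
    intro A B d e hle hA hB
    have hApos := Finset.card_pos.2 hA
    have hBpos := Finset.card_pos.2 hB
    by_cases hcB : 2 ≤ B.card ∧ ∃ b0 ∈ B, e b0 = 1
    · obtain ⟨hB2, b0, hb0, he1⟩ := hcB
      have hcardB' : (B.erase b0).card = B.card - 1 := Finset.card_erase_of_mem hb0
      set m := B.card - 2 with hmdef
      have hBm : B.card - 1 = m + 1 := by omega
      have hB'ne : (B.erase b0).Nonempty := by
        rw [← Finset.card_pos, hcardB']; omega
      have harith : A.card + (B.erase b0).card ≤ n := by omega
      have hm2 : B.card - 1 - 1 = m := by omega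
      rw [tree_sigma_B A B d e hb0 he1]
      have hcode : codeCard A (B.card - 1) d = ∑ a0 : Fin s,
          Nat.card {f : Fin (m + 1) → Fin s //
            ((∀ k, f k ∈ A) ∧
              ∀ a ∈ A, (Finset.univ.filter (fun k => f k = a)).card + 1 = d a) ∧
            f (Fin.last m) = a0} := by
        rw [hBm]; exact code_sigma A m d
      rw [hcode, Finset.sum_mul]
      apply Finset.sum_congr rfl
      intro a0 _
      by_cases ha0 : a0 ∈ A
      · by_cases hd1 : 1 ≤ d a0
        · have step1 := tree_fiber_B_eq (e := e) hb0 he1 ha0 hd1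
          have step2 := ih A (B.erase b0) (Function.update d a0 (d a0 - 1)) e harith hA hB'ne
          have step3 := code_fiber_card (m := m) (d := d) ha0
          have step4 := code_erase hb0 he1 (A.card - 1)
          rw [step1, step2, step3, step4, hcardB', hm2]
        · have hd0 : d a0 = 0 := Nat.eq_zero_of_not_pos hd1
          have z1 := tree_fiber_B_zero_d0 (B := B) (e := e) (b0 := b0) ha0 hd0
          have z2 := code_fiber_zero_d0 (m := m) ha0 hd0
          rw [z1, z2, zero_mul]
      · have z1 := tree_fiber_B_zero_notmem (A := A) (B := B) (d := d) (e := e) (b0 := b0) ha0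
        have z2 := code_fiber_zero_notmem (m := m) (d := d) ha0
        rw [z1, z2, zero_mul]
    · by_cases hcA : 2 ≤ A.card ∧ ∃ a0 ∈ A, d a0 = 1
      · obtain ⟨hA2, a0, ha0, hd1⟩ := hcA
        have hcardA' : (A.erase a0).card = A.card - 1 := Finset.card_erase_of_mem ha0
        set m := A.card - 2 with hmdef
        have hAm : A.card - 1 = m + 1 := by omega
        have hA'ne : (A.erase a0).Nonempty := by
          rw [← Finset.card_pos, hcardA']; omega
        have harith : (A.erase a0).card + B.card ≤ n := by omega
        have hm2 : A.card - 1 - 1 = m := by omega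
        rw [tree_sigma_A A B d e ha0 hd1]
        have hcode : codeCard B (A.card - 1) e = ∑ b0 : Fin t,
            Nat.card {f : Fin (m + 1) → Fin t //
              ((∀ k, f k ∈ B) ∧
                ∀ b ∈ B, (Finset.univ.filter (fun k => f k = b)).card + 1 = e b) ∧
              f (Fin.last m) = b0} := by
          rw [hAm]; exact code_sigma B m e
        rw [hcode, Finset.mul_sum]
        apply Finset.sum_congr rfl
        intro b0 _
        by_cases hb0 : b0 ∈ B
        · by_cases he1' : 1 ≤ e b0
          · have step1 := tree_fiber_A_eq (d := d) ha0 hd1 hb0 he1'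
            have step2 := ih (A.erase a0) B d (Function.update e b0 (e b0 - 1)) harith hA'ne hB
            have step3 := code_fiber_card (m := m) (d := e) hb0
            have step4 := code_erase ha0 hd1 (B.card - 1)
            rw [step1, step2, step3, step4, hcardA', hm2]
          · have he0 : e b0 = 0 := Nat.eq_zero_of_not_pos he1'
            have z1 := tree_fiber_A_zero_e0 (A := A) (d := d) (a0 := a0) hb0 he0
            have z2 := code_fiber_zero_d0 (m := m) hb0 he0
            rw [z1, z2, mul_zero]
        · have z1 := tree_fiber_A_zero_notmem (A := A) (B := B) (d := d) (e := e) (a0 := a0) hb0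
          have z2 := code_fiber_zero_notmem (m := m) (d := e) hb0
          rw [z1, z2, mul_zero]
      · push_neg at hcB hcA
        by_cases he0 : ∃ b ∈ B, e b = 0
        · obtain ⟨b, hb, hbe⟩ := he0
          rw [treeCard_zero_e0 hA hb hbe, code_zero_of_exists_zero hb hbe, mul_zero]
        · by_cases hd0 : ∃ a ∈ A, d a = 0
          · obtain ⟨a, ha, hda⟩ := hd0
            rw [treeCard_zero_d0 hB ha hda, code_zero_of_exists_zero ha hda, zero_mul]
          · push_neg at he0 hd0
            by_cases hB1 : B.card = 1
            · obtain ⟨b0, hBeq⟩ := Finset.card_eq_one.1 hB1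
              by_cases hA1 : A.card = 1
              · obtain ⟨a0, hAeq⟩ := Finset.card_eq_one.1 hA1
                subst hAeq
                subst hBeq
                rw [treeCard_base]
                have h5 : ({b0} : Finset (Fin t)).card - 1 = 0 := by simp
                have h6 : ({a0} : Finset (Fin s)).card - 1 = 0 := by simp
                rw [h5, h6]
                have hF : codeCard ({a0} : Finset (Fin s)) 0 d
                    = if d a0 = 1 then 1 else 0 := by
                  by_cases hdd : d a0 = 1
                  · rw [if_pos hdd]; exact codeCard_level0_singleton hdd
                  · rw [if_neg hdd]
                    exact code_zero_level0 (Finset.mem_singleton_self a0) hdd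
                have hG : codeCard ({b0} : Finset (Fin t)) 0 e
                    = if e b0 = 1 then 1 else 0 := by
                  by_cases hee : e b0 = 1
                  · rw [if_pos hee]; exact codeCard_level0_singleton hee
                  · rw [if_neg hee]
                    exact code_zero_level0 (Finset.mem_singleton_self b0) hee
                rw [hF, hG]
              · obtain ⟨a, ha⟩ := hA
                have hA2 : 2 ≤ A.card := by omega
                have hda : 2 ≤ d a := by
                  have h7 := hcA hA2 a ha
                  have h8 := hd0 a ha
                  omega
                rw [treeCard_zero_starB hBeq ha hda]
                have h7 : B.card - 1 = 0 := by omega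
                rw [h7, code_zero_level0 ha (by omega), zero_mul]
            · have hB2 : 2 ≤ B.card := by omega
              have heB : ∀ b ∈ B, 2 ≤ e b := by
                intro b hb
                have h7 := hcB hB2 b hb
                have h8 := he0 b hb
                omega
              by_cases hA1 : A.card = 1
              · obtain ⟨a0, hAeq⟩ := Finset.card_eq_one.1 hA1
                obtain ⟨b, hb⟩ := hB
                rw [treeCard_zero_starA hAeq hb (heB b hb)]
                have h7 : A.card - 1 = 0 := by omega
                rw [h7, code_zero_level0 hb (by have := heB b hb; omega), mul_zero]
              · have hA2 : 2 ≤ A.card := by omega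
                have hdA : ∀ a ∈ A, 2 ≤ d a := by
                  intro a ha
                  have h7 := hcA hA2 a ha
                  have h8 := hd0 a ha
                  omega
                rw [treeCard_zero_min2 hA hB hdA heB]
                rcases Nat.eq_zero_or_pos (codeCard A (B.card - 1) d) with h | h
                · rw [h, zero_mul]
                rcases Nat.eq_zero_or_pos (codeCard B (A.card - 1) e) with h' | h'
                · rw [h', mul_zero]
                exfalso
                have hb1 := code_bound (by omega : codeCard A (B.card - 1) d ≠ 0) hdA
                have hb2 := code_bound (by omega : codeCard B (A.card - 1) e ≠ 0) heB
                omega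

end Bip

lemma sum_statistic {X C W : Type*} [Fintype X] [Fintype C] [DecidableEq W]
    (σ : X → W) (τ : C → W)
    (h : ∀ w, Nat.card {x : X // σ x = w} = Nat.card {c : C // τ c = w})
    (mfun : W → ℝ) : ∑ x : X, mfun (σ x) = ∑ c : C, mfun (τ c) := by
  classical
  have hcard : ∀ w, (Finset.univ.filter (fun x : X => σ x = w)).card
      = (Finset.univ.filter (fun c : C => τ c = w)).card := by
    intro w
    have h1 : (Finset.univ.filter (fun x : X => σ x = w)).card
        = Nat.card {x : X // σ x = w} := by
      rw [Nat.card_eq_fintype_card, Fintype.card_subtype]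
    have h2 : (Finset.univ.filter (fun c : C => τ c = w)).card
        = Nat.card {c : C // τ c = w} := by
      rw [Nat.card_eq_fintype_card, Fintype.card_subtype]
    rw [h1, h2, h]
  rw [Finset.sum_comp mfun σ, Finset.sum_comp mfun τ]
  have hsub1 : Finset.univ.image σ ⊆ Finset.univ.image σ ∪ Finset.univ.image τ :=
    Finset.subset_union_left
  have hsub2 : Finset.univ.image τ ⊆ Finset.univ.image σ ∪ Finset.univ.image τ :=
    Finset.subset_union_right
  rw [Finset.sum_subset hsub1 ?_, Finset.sum_subset hsub2 ?_]
  · apply Finset.sum_congr rfl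
    intro w _
    rw [hcard w]
  · intro w _ hw
    have : (Finset.univ.filter (fun c : C => τ c = w)).card = 0 := by
      rw [Finset.card_eq_zero, Finset.filter_eq_empty_iff]
      intro c _ hc
      exact hw (Finset.mem_image.2 ⟨c, Finset.mem_univ c, hc⟩)
    rw [this, zero_smul]
  · intro w _ hw
    have : (Finset.univ.filter (fun x : X => σ x = w)).card = 0 := by
      rw [Finset.card_eq_zero, Finset.filter_eq_empty_iff]
      intro x _ hx
      exact hw (Finset.mem_image.2 ⟨x, Finset.mem_univ x, hx⟩)
    rw [this, zero_smul]

lemma sum_pow_fun {α : Type*} [Fintype α] [DecidableEq α] (x : α → ℝ) :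
    ∀ n : ℕ, ∑ f : Fin n → α, ∏ k, x (f k) = (∑ a, x a) ^ n := by
  intro n
  induction n with
  | zero =>
    haveI : Unique (Fin 0 → α) := ⟨⟨fun k => k.elim0⟩, fun f => funext fun k => k.elim0⟩
    rw [pow_zero, Fintype.sum_unique]
    simp
  | succ n ihn =>
    have he : ∀ p : α × (Fin n → α),
        x p.1 * ∏ k, x (p.2 k) = ∏ k : Fin (n + 1), x ((Fin.consEquiv (fun _ => α)) p k) := by
      intro p
      rw [Fin.prod_univ_succ]
      simp [Fin.consEquiv, Fin.cons_zero, Fin.cons_succ]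
    rw [← Fintype.sum_equiv (Fin.consEquiv (fun _ => α))
      (fun p : α × (Fin n → α) => x p.1 * ∏ k, x (p.2 k))
      (fun F : Fin (n + 1) → α => ∏ k, x (F k)) he]
    rw [Fintype.sum_prod_type]
    have hinner : ∀ a : α, (∑ f : Fin n → α, x (a, f).1 * ∏ k, x ((a, f).2 k))
        = x a * (∑ b, x b) ^ n := by
      intro a
      show (∑ f : Fin n → α, x a * ∏ k, x (f k)) = _
      rw [← Finset.mul_sum, ihn]
    rw [Finset.sum_congr rfl fun a _ => hinner a, ← Finset.sum_mul, pow_succ]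
    exact mul_comm _ _

lemma prod_pow_fiber {α : Type*} [Fintype α] [DecidableEq α] {n : ℕ}
    (x : α → ℝ) (f : Fin n → α) :
    ∏ a : α, x a ^ (Finset.univ.filter (fun k => f k = a)).card = ∏ k, x (f k) := by
  classical
  rw [Finset.prod_comp x f]
  refine (Finset.prod_subset (Finset.subset_univ _) ?_).symm
  intro a _ ha
  have : (Finset.univ.filter (fun k => f k = a)).card = 0 := by
    rw [Finset.card_eq_zero, Finset.filter_eq_empty_iff]
    intro k _ hk
    exact ha (Finset.mem_image.2 ⟨k, Finset.mem_univ k, hk⟩)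
  rw [this, pow_zero]

section Bip
variable {s t : ℕ}

lemma treeOn_univ_iff (hs : 1 ≤ s) {T : SimpleGraph (Fin s ⊕ Fin t)} :
    IsTreeOn (GB s t) (SS (Finset.univ : Finset (Fin s)) (Finset.univ : Finset (Fin t))) T
      ↔ T ≤ GB s t ∧ T.IsTree := by
  have hSuniv : ∀ v : Fin s ⊕ Fin t,
      v ∈ SS (Finset.univ : Finset (Fin s)) (Finset.univ : Finset (Fin t)) := by
    intro v; cases v <;> simp [mem_SS_inl, mem_SS_inr]
  constructor
  · rintro ⟨h1, h2, h3, h4⟩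
    refine ⟨h1, (T.isTree_iff).2 ⟨(T.connected_iff).2 ⟨?_, ⟨Sum.inl ⟨0, hs⟩⟩⟩, h2⟩⟩
    intro v w
    exact h3 v (hSuniv v) w (hSuniv w)
  · rintro ⟨h1, h2⟩
    rw [isTree_iff] at h2
    refine ⟨h1, h2.2, fun v _ w _ => h2.1.preconnected v w, fun v hv => ?_⟩
    exact absurd (hSuniv v) hv

lemma fiber_eq (hs : 1 ≤ s) (ht : 1 ≤ t) (dd : Fin s → ℕ) (ee : Fin t → ℕ) :
    Nat.card {T : SimpleGraph (Fin s ⊕ Fin t) // (T ≤ GB s t ∧ T.IsTree) ∧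
      ((fun a => degT T (Sum.inl a)) = dd ∧ (fun b => degT T (Sum.inr b)) = ee)} =
    Nat.card {f : Fin (t - 1) → Fin s //
        (fun a => (Finset.univ.filter (fun k => f k = a)).card + 1) = dd} *
      Nat.card {g : Fin (s - 1) → Fin t //
        (fun b => (Finset.univ.filter (fun k => g k = b)).card + 1) = ee} := by
  have hSuniv : ∀ v : Fin s ⊕ Fin t,
      v ∈ SS (Finset.univ : Finset (Fin s)) (Finset.univ : Finset (Fin t)) := by
    intro v; cases v <;> simp [mem_SS_inl, mem_SS_inr]
  have h1 : Nat.card {T : SimpleGraph (Fin s ⊕ Fin t) // (T ≤ GB s t ∧ T.IsTree) ∧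
      ((fun a => degT T (Sum.inl a)) = dd ∧ (fun b => degT T (Sum.inr b)) = ee)}
      = treeCard (Finset.univ : Finset (Fin s)) (Finset.univ : Finset (Fin t)) dd ee := by
    rw [treeCard]
    apply Nat.card_congr
    apply Equiv.subtypeEquivRight
    intro T
    constructor
    · rintro ⟨htree, hd, he⟩
      refine ⟨(treeOn_univ_iff hs).2 htree, ?_⟩
      intro v _
      cases v with
      | inl a => exact congrFun hd a
      | inr b => exact congrFun he b
    · rintro ⟨htree, hdeg⟩
      refine ⟨(treeOn_univ_iff hs).1 htree, funext fun a => ?_, funext fun b => ?_⟩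
      · exact hdeg (Sum.inl a) (hSuniv _)
      · exact hdeg (Sum.inr b) (hSuniv _)
  have huA : (Finset.univ : Finset (Fin s)).Nonempty := ⟨⟨0, hs⟩, Finset.mem_univ _⟩
  have huB : (Finset.univ : Finset (Fin t)).Nonempty := ⟨⟨0, ht⟩, Finset.mem_univ _⟩
  have h2 := count_main (s + t) (Finset.univ : Finset (Fin s))
    (Finset.univ : Finset (Fin t)) dd ee
    (by rw [Finset.card_fin, Finset.card_fin]) huA huB
  rw [Finset.card_fin, Finset.card_fin] at h2
  have h3 : codeCard (Finset.univ : Finset (Fin s)) (t - 1) dd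
      = Nat.card {f : Fin (t - 1) → Fin s //
        (fun a => (Finset.univ.filter (fun k => f k = a)).card + 1) = dd} := by
    rw [codeCard]
    apply Nat.card_congr
    apply Equiv.subtypeEquivRight
    intro f
    constructor
    · rintro ⟨-, h⟩
      exact funext fun a => h a (Finset.mem_univ a)
    · intro h
      exact ⟨fun k => Finset.mem_univ _, fun a _ => congrFun h a⟩
  have h4 : codeCard (Finset.univ : Finset (Fin t)) (s - 1) ee
      = Nat.card {g : Fin (s - 1) → Fin t //
        (fun b => (Finset.univ.filter (fun k => g k = b)).card + 1) = ee} := by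
    rw [codeCard]
    apply Nat.card_congr
    apply Equiv.subtypeEquivRight
    intro g
    constructor
    · rintro ⟨-, h⟩
      exact funext fun b => h b (Finset.mem_univ b)
    · intro h
      exact ⟨fun k => Finset.mem_univ _, fun b _ => congrFun h b⟩
  rw [h1, h2, h3, h4]

end Bip

end Stmt10Aux

theorem stmt10 (s t : ℕ) (hs : 1 ≤ s) (ht : 1 ≤ t) (X : Fin s → ℝ) (Y : Fin t → ℝ) :
    degEnum (completeBipartiteGraph (Fin s) (Fin t)) (Sum.elim X Y) =
      (∑ i : Fin s, X i) ^ (t - 1) * (∑ j : Fin t, Y j) ^ (s - 1) := by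
  classical
  have hfin : {T : SimpleGraph (Fin s ⊕ Fin t) |
      T ≤ completeBipartiteGraph (Fin s) (Fin t) ∧ T.IsTree}.Finite := Set.toFinite _
  rw [degEnum, ← Set.Finite.coe_toFinset hfin, finsum_mem_coe_finset, ← Finset.sum_coe_sort]
  set σ : {x // x ∈ hfin.toFinset} → (Fin s → ℕ) × (Fin t → ℕ) :=
    fun T => (fun a => Stmt10Aux.degT T.1 (Sum.inl a),
      fun b => Stmt10Aux.degT T.1 (Sum.inr b)) with hσ
  set τ : (Fin (t - 1) → Fin s) × (Fin (s - 1) → Fin t) → (Fin s → ℕ) × (Fin t → ℕ) :=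
    fun c => (fun a => (Finset.univ.filter (fun k => c.1 k = a)).card + 1,
      fun b => (Finset.univ.filter (fun k => c.2 k = b)).card + 1) with hτ
  set mfun : (Fin s → ℕ) × (Fin t → ℕ) → ℝ :=
    fun de => (∏ a, X a ^ (de.1 a - 1)) * ∏ b, Y b ^ (de.2 b - 1) with hmfun
  have hfib : ∀ w, Nat.card {x : {x // x ∈ hfin.toFinset} // σ x = w}
      = Nat.card {c : (Fin (t - 1) → Fin s) × (Fin (s - 1) → Fin t) // τ c = w} := by
    rintro ⟨dd, ee⟩
    have e1 : {x : {x // x ∈ hfin.toFinset} // σ x = (dd, ee)} ≃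
        {T : SimpleGraph (Fin s ⊕ Fin t) //
          (T ≤ completeBipartiteGraph (Fin s) (Fin t) ∧ T.IsTree) ∧
          ((fun a => Stmt10Aux.degT T (Sum.inl a)) = dd ∧
            (fun b => Stmt10Aux.degT T (Sum.inr b)) = ee)} :=
      { toFun := fun x => ⟨x.1.1, ⟨hfin.mem_toFinset.1 x.1.2,
          (Prod.ext_iff.1 x.2).1, (Prod.ext_iff.1 x.2).2⟩⟩
        invFun := fun y => ⟨⟨y.1, hfin.mem_toFinset.2 ⟨y.2.1.1, y.2.1.2⟩⟩,
          Prod.ext_iff.2 ⟨y.2.2.1, y.2.2.2⟩⟩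
        left_inv := fun x => Subtype.ext (Subtype.ext rfl)
        right_inv := fun y => Subtype.ext rfl }
    have e2 : {c : (Fin (t - 1) → Fin s) × (Fin (s - 1) → Fin t) // τ c = (dd, ee)} ≃
        ({f : Fin (t - 1) → Fin s //
            (fun a => (Finset.univ.filter (fun k => f k = a)).card + 1) = dd} ×
          {g : Fin (s - 1) → Fin t //
            (fun b => (Finset.univ.filter (fun k => g k = b)).card + 1) = ee}) :=
      { toFun := fun c => (⟨c.1.1, (Prod.ext_iff.1 c.2).1⟩, ⟨c.1.2, (Prod.ext_iff.1 c.2).2⟩)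
        invFun := fun p => ⟨(p.1.1, p.2.1), Prod.ext_iff.2 ⟨p.1.2, p.2.2⟩⟩
        left_inv := fun c => Subtype.ext rfl
        right_inv := fun p => rfl }
    rw [Nat.card_congr e1, Nat.card_congr e2, Nat.card_prod]
    exact Stmt10Aux.fiber_eq hs ht dd ee
  have h2 := Stmt10Aux.sum_statistic σ τ hfib mfun
  calc (∑ T : {x // x ∈ hfin.toFinset},
        ∏ v : Fin s ⊕ Fin t, Sum.elim X Y v ^ (((T : SimpleGraph _).neighborSet v).ncard - 1))
      = ∑ T : {x // x ∈ hfin.toFinset}, mfun (σ T) := by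
        apply Finset.sum_congr rfl
        intro T _
        show _ = (∏ a, X a ^ (Stmt10Aux.degT T.1 (Sum.inl a) - 1))
          * ∏ b, Y b ^ (Stmt10Aux.degT T.1 (Sum.inr b) - 1)
        rw [Fintype.prod_sum_type]
        rfl
    _ = ∑ c : (Fin (t - 1) → Fin s) × (Fin (s - 1) → Fin t), mfun (τ c) := h2
    _ = ∑ c : (Fin (t - 1) → Fin s) × (Fin (s - 1) → Fin t),
          (∏ k, X (c.1 k)) * ∏ k, Y (c.2 k) := by
        apply Finset.sum_congr rfl
        intro c _
        show (∏ a, X a ^ (((Finset.univ.filter (fun k => c.1 k = a)).card + 1) - 1))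
          * (∏ b, Y b ^ (((Finset.univ.filter (fun k => c.2 k = b)).card + 1) - 1)) = _
        simp only [Nat.add_sub_cancel]
        rw [Stmt10Aux.prod_pow_fiber X c.1, Stmt10Aux.prod_pow_fiber Y c.2]
    _ = (∑ f : Fin (t - 1) → Fin s, ∏ k, X (f k))
          * ∑ g : Fin (s - 1) → Fin t, ∏ k, Y (g k) := by
        rw [Fintype.sum_prod_type]
        rw [Finset.sum_congr rfl (fun f _ => by
          show (∑ g : Fin (s - 1) → Fin t, (∏ k, X (f k)) * ∏ k, Y (g k)) = _
          rw [← Finset.mul_sum])]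
        rw [← Finset.sum_mul]
    _ = (∑ i : Fin s, X i) ^ (t - 1) * (∑ j : Fin t, Y j) ^ (s - 1) := by
        rw [Stmt10Aux.sum_pow_fun X (t - 1), Stmt10Aux.sum_pow_fun Y (s - 1)]
end
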